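/- arXiv:1608.01765 — 9 statements merged into one kernel-verified Lean document; each statement's English description precedes it below -/
import Mathlib

section
/- For every odd prime p, the function α_p is multiplicative: if k₁ and k₂ are coprime positive integers, then α_p(k₁·k₂) = α_p(k₁)·α_p(k₂). -/
open Finset ArithmeticFunction

def sigma1 (k : ℕ) : ℕ := ∑ d ∈ k.divisors, d

noncomputable def sigmaTerm (k d : ℕ) : ℚ :=
  if d ∣ k then (sigma1 (k / d) : ℚ) / (k / d) else 0

noncomputable def alphaP (p k : ℕ) : ℚ :=
  sigmaTerm k 1 - 3 * sigmaTerm k 2 + 2 * sigmaTerm k 4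
    + sigmaTerm k p - 3 * sigmaTerm k (2 * p) + 2 * sigmaTerm k (4 * p)

/-- s(k) = σ₁(k)/k. -/
noncomputable def sFun : ArithmeticFunction ℚ :=
  ⟨fun n => (sigma1 n : ℚ) / n, by simp [sigma1]⟩

@[simp] lemma sFun_apply (n : ℕ) : sFun n = (sigma1 n : ℚ) / n := rfl

/-- E, supported on {1,2,4} with values 1, -3, 2. -/
noncomputable def eFun : ArithmeticFunction ℚ :=
  ⟨fun n => (if n = 1 then 1 else 0) + (if n = 2 then -3 else 0) + (if n = 4 then 2 else 0),
    by norm_num⟩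

@[simp] lemma eFun_apply (n : ℕ) :
    eFun n = (if n = 1 then 1 else 0) + (if n = 2 then -3 else 0)
      + (if n = 4 then 2 else 0) := rfl

/-- P, supported on {1,p} with values 1, 1. -/
noncomputable def pFun (p : ℕ) (hp : p ≠ 0) : ArithmeticFunction ℚ :=
  ⟨fun n => (if n = 1 then 1 else 0) + (if n = p then 1 else 0),
    by simp [Ne.symm hp]⟩

@[simp] lemma pFun_apply (p : ℕ) (hp : p ≠ 0) (n : ℕ) :
    pFun p hp n = (if n = 1 then 1 else 0) + (if n = p then 1 else 0) := rfl

lemma two_dvd_both {m n : ℕ} (h : Nat.Coprime m n) (h2m : 2 ∣ m) (h2n : 2 ∣ n) : False := by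
  have := Nat.dvd_gcd h2m h2n
  rw [h] at this
  omega

lemma sFun_mult : sFun.IsMultiplicative := by
  constructor
  · simp [sigma1]
  · intro m n h
    rcases Nat.eq_zero_or_pos m with rfl | hm
    · obtain rfl : n = 1 := Nat.coprime_zero_left n |>.mp h
      simp [sigma1]
    rcases Nat.eq_zero_or_pos n with rfl | hn
    · obtain rfl : m = 1 := Nat.coprime_zero_right m |>.mp h
      simp [sigma1]
    have key : sigma1 (m * n) = sigma1 m * sigma1 n := by
      have := (isMultiplicative_sigma (k := 1)).map_mul_of_coprime h
      simpa [sigma_one_apply, sigma1] using this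
    simp only [sFun_apply, key]
    have hm' : (m : ℚ) ≠ 0 := Nat.cast_ne_zero.mpr hm.ne'
    have hn' : (n : ℚ) ≠ 0 := Nat.cast_ne_zero.mpr hn.ne'
    push_cast
    field_simp

lemma eFun_mult : eFun.IsMultiplicative := by
  constructor
  · norm_num
  · intro m n h
    rcases Nat.eq_zero_or_pos m with rfl | hm
    · obtain rfl : n = 1 := Nat.coprime_zero_left n |>.mp h
      norm_num
    rcases Nat.eq_zero_or_pos n with rfl | hn
    · obtain rfl : m = 1 := Nat.coprime_zero_right m |>.mp h
      norm_num
    rcases eq_or_ne m 1 with rfl | hm1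
    · norm_num
    rcases eq_or_ne n 1 with rfl | hn1
    · norm_num
    have hm2 : 2 ≤ m := by omega
    have hn2 : 2 ≤ n := by omega
    have h4 : 4 ≤ m * n := Nat.mul_le_mul hm2 hn2
    have hmn4 : m * n ≠ 4 := by
      intro hq
      have hmle : m ≤ 2 := by nlinarith
      obtain rfl : m = 2 := by omega
      obtain rfl : n = 2 := by omega
      exact two_dvd_both h ⟨1, rfl⟩ ⟨1, rfl⟩
    have lhs0 : eFun (m * n) = 0 := by
      simp only [eFun_apply]
      have h1 : m * n ≠ 1 := by omega
      have h2 : m * n ≠ 2 := by omega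
      simp [h1, h2, hmn4]
    rw [lhs0]
    by_cases hme : m = 2 ∨ m = 4
    · by_cases hne : n = 2 ∨ n = 4
      · exfalso
        refine two_dvd_both h ?_ ?_
        · rcases hme with rfl | rfl <;> norm_num
        · rcases hne with rfl | rfl <;> norm_num
      · push_neg at hne
        simp [eFun_apply, hn1, hne.1, hne.2]
    · push_neg at hme
      simp [eFun_apply, hm1, hme.1, hme.2]

lemma pFun_mult (p : ℕ) (hp : p.Prime) : (pFun p hp.pos.ne').IsMultiplicative := by
  constructor
  · simp [hp.ne_one.symm]
  · intro m n h
    rcases Nat.eq_zero_or_pos m with rfl | hm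
    · obtain rfl : n = 1 := Nat.coprime_zero_left n |>.mp h
      simp
    rcases Nat.eq_zero_or_pos n with rfl | hn
    · obtain rfl : m = 1 := Nat.coprime_zero_right m |>.mp h
      simp
    have h1p : (1:ℕ) ≠ p := fun e => hp.ne_one e.symm
    rcases eq_or_ne m 1 with rfl | hm1
    · simp [h1p]
    rcases eq_or_ne n 1 with rfl | hn1
    · simp [h1p]
    have hmn1 : m * n ≠ 1 := by
      have := Nat.mul_le_mul (show 2 ≤ m by omega) (show 2 ≤ n by omega); omega
    have hmnp : m * n ≠ p := by
      intro hq
      have hdvd : m ∣ p := ⟨n, hq.symm⟩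
      rcases (hp.eq_one_or_self_of_dvd m hdvd) with rfl | rfl
      · exact hm1 rfl
      · have : n = 1 := by
          have := hq
          nlinarith [hp.two_le]
        exact hn1 this
    have hmp : m ≠ p ∨ n ≠ p := by
      by_contra hc
      push_neg at hc
      obtain ⟨rfl, h2⟩ := hc
      rw [h2] at h
      have := Nat.dvd_gcd (dvd_refl m) (dvd_refl m)
      rw [h] at this
      have := Nat.le_of_dvd one_pos this
      omega
    simp only [pFun_apply, hm1, hn1, hmn1, hmnp, if_false]
    rcases hmp with hne | hne
    · simp [hne]
    · simp [hne]

lemma conv_e (g : ArithmeticFunction ℚ) (k : ℕ) (hk : k ≠ 0) :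
    (eFun * g) k = g k - 3 * (if 2 ∣ k then g (k / 2) else 0)
      + 2 * (if 4 ∣ k then g (k / 4) else 0) := by
  rw [mul_apply, Nat.sum_divisorsAntidiagonal (fun x y => eFun x * g y)]
  simp only [eFun_apply, add_mul, ite_mul, zero_mul, one_mul, neg_mul]
  rw [Finset.sum_add_distrib, Finset.sum_add_distrib,
    Finset.sum_ite_eq' k.divisors 1 (fun d => g (k / d)),
    Finset.sum_ite_eq' k.divisors 2 (fun d => -(3 * g (k / d))),
    Finset.sum_ite_eq' k.divisors 4 (fun d => 2 * g (k / d))]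
  simp only [Nat.mem_divisors, ne_eq, hk, not_false_iff, and_true, Nat.one_dvd, if_true,
    Nat.div_one]
  split_ifs <;> ring

lemma conv_p (p : ℕ) (hp : p ≠ 1) (hp0 : p ≠ 0) (g : ArithmeticFunction ℚ) (k : ℕ) (hk : k ≠ 0) :
    (pFun p hp0 * g) k = g k + (if p ∣ k then g (k / p) else 0) := by
  rw [mul_apply, Nat.sum_divisorsAntidiagonal (fun x y => pFun p hp0 x * g y)]
  simp only [pFun_apply, add_mul, ite_mul, zero_mul, one_mul]
  rw [Finset.sum_add_distrib,
    Finset.sum_ite_eq' k.divisors 1 (fun d => g (k / d)),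
    Finset.sum_ite_eq' k.divisors p (fun d => g (k / d))]
  simp only [Nat.mem_divisors, ne_eq, hk, not_false_iff, and_true, Nat.one_dvd, if_true,
    Nat.div_one]

lemma sigmaTerm_eq (k d : ℕ) : sigmaTerm k d = if d ∣ k then sFun (k / d) else 0 := by
  unfold sigmaTerm
  split_ifs with h
  · rcases eq_or_ne d 0 with rfl | hd
    · obtain rfl : k = 0 := by simpa using h
      simp
    · rw [sFun_apply, Nat.cast_div h (Nat.cast_ne_zero.mpr hd)]
  · rfl

lemma alphaP_eq (p : ℕ) (hp : p.Prime) (k : ℕ) (hk : k ≠ 0) :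
    alphaP p k = (pFun p hp.pos.ne' * (eFun * sFun)) k := by
  rw [conv_p p hp.ne_one hp.pos.ne' _ k hk, conv_e sFun k hk]
  by_cases hpk : p ∣ k
  · have hkp0 : k / p ≠ 0 := by
      intro h0
      have := Nat.div_mul_cancel hpk
      rw [h0] at this
      simp at this
      omega
    rw [conv_e sFun (k / p) hkp0]
    have h2 : (2 ∣ k / p) ↔ (2 * p ∣ k) := by
      rw [Nat.dvd_div_iff_mul_dvd hpk, mul_comm]
    have h4 : (4 ∣ k / p) ↔ (4 * p ∣ k) := by
      rw [Nat.dvd_div_iff_mul_dvd hpk, mul_comm]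
    have hd2 : k / p / 2 = k / (2 * p) := by
      rw [Nat.div_div_eq_div_mul, mul_comm]
    have hd4 : k / p / 4 = k / (4 * p) := by
      rw [Nat.div_div_eq_div_mul, mul_comm]
    simp only [h2, h4, hd2, hd4]
    simp only [alphaP, sigmaTerm_eq, hpk, if_true, Nat.one_dvd, Nat.div_one]
    ring
  · have h2p : ¬ (2 * p ∣ k) := fun hd => hpk (dvd_trans (dvd_mul_left p 2) hd)
    have h4p : ¬ (4 * p ∣ k) := fun hd => hpk (dvd_trans (dvd_mul_left p 4) hd)
    simp only [alphaP, sigmaTerm_eq, hpk, h2p, h4p, if_false, Nat.one_dvd, if_true, Nat.div_one]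
    ring

theorem alphaP_multiplicative (p : ℕ) (hp : p.Prime) (hpodd : Odd p)
    (k₁ k₂ : ℕ) (hk₁ : 0 < k₁) (hk₂ : 0 < k₂) (hco : Nat.Coprime k₁ k₂) :
    alphaP p (k₁ * k₂) = alphaP p k₁ * alphaP p k₂ := by
  rw [alphaP_eq p hp k₁ hk₁.ne', alphaP_eq p hp k₂ hk₂.ne',
    alphaP_eq p hp (k₁ * k₂) (Nat.mul_ne_zero hk₁.ne' hk₂.ne')]
  exact ((pFun_mult p hp).mul (eFun_mult.mul sFun_mult)).map_mul_of_coprime hco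
end

section
/- For every odd prime p and every positive integer k: β_p(k) = 2·α_p(k) when k is odd, and β_p(k) = 0 when k is even. -/
open Finset

/-- β_p(k) = 2σ₁(k)/k − 3σ₁(k/2)/(k/2) + σ₁(k/4)/(k/4) + 2σ₁(k/p)/(k/p)
      − 3σ₁(k/(2p))/(k/(2p)) + σ₁(k/(4p))/(k/(4p)). -/
noncomputable def betaP (p k : ℕ) : ℚ :=
  2 * sigmaTerm k 1 - 3 * sigmaTerm k 2 + sigmaTerm k 4
    + 2 * sigmaTerm k p - 3 * sigmaTerm k (2 * p) + sigmaTerm k (4 * p)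

lemma sigmaTerm_of_not_dvd {k d : ℕ} (h : ¬ d ∣ k) : sigmaTerm k d = 0 := if_neg h

lemma sigma1_pow_sum (a : ℕ) : sigma1 (2 ^ a) = ∑ k ∈ Finset.range (a + 1), 2 ^ k := by
  have := ArithmeticFunction.sigma_one_apply_prime_pow (p := 2) (i := a) Nat.prime_two
  rw [ArithmeticFunction.sigma_one_apply] at this
  simpa [sigma1] using this

lemma sigma1_two_pow (a : ℕ) : (sigma1 (2 ^ a) : ℚ) = 2 ^ (a + 1) - 1 := by
  rw [sigma1_pow_sum]
  push_cast
  rw [geom_sum_eq (by norm_num : (2:ℚ) ≠ 1)]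
  norm_num

lemma sigma1_key {a u : ℕ} (hu : Odd u) :
    (sigma1 (2 ^ a * u) : ℚ) = (2 ^ (a + 1) - 1) * sigma1 u := by
  have hco : Nat.Coprime (2 ^ a) u :=
    Nat.Coprime.pow_left _ (Nat.coprime_two_left.mpr hu)
  have h' : sigma1 (2 ^ a * u) = sigma1 (2 ^ a) * sigma1 u :=
    Nat.Coprime.sum_divisors_mul hco
  rw [h']; push_cast; rw [sigma1_two_pow]

lemma sigma1_A {m : ℕ} (hm : Odd m) : (sigma1 (2 * m) : ℚ) = 3 * sigma1 m := by
  have := sigma1_key (a := 1) hm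
  norm_num at this
  simpa using this

lemma sigma1_B (t : ℕ) (ht : 0 < t) :
    (sigma1 (4 * t) : ℚ) + 2 * sigma1 t = 3 * sigma1 (2 * t) := by
  obtain ⟨a, u, hu, rfl⟩ : ∃ a u, Odd u ∧ t = 2 ^ a * u :=
    ⟨t.factorization 2, t / 2 ^ t.factorization 2,
      Nat.odd_iff.mpr (Nat.two_dvd_ne_zero.mp
        (Nat.not_dvd_ordCompl Nat.prime_two ht.ne')),
      (Nat.ordProj_mul_ordCompl_eq_self t 2).symm⟩
  have h4 : 4 * (2 ^ a * u) = 2 ^ (a + 2) * u := by ring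
  have h2 : 2 * (2 ^ a * u) = 2 ^ (a + 1) * u := by ring
  rw [h4, h2, sigma1_key hu, sigma1_key hu, sigma1_key hu]
  ring

lemma sigmaTerm_dvd {k d : ℕ} (h : d ∣ k) :
    sigmaTerm k d = (sigma1 (k / d) : ℚ) / (k / d) := if_pos h

lemma sigmaTerm_mul_right {p k : ℕ} (hpk : p ∣ k) (d : ℕ) :
    sigmaTerm k (d * p) = sigmaTerm (k / p) d := by
  unfold sigmaTerm
  have hiff : d * p ∣ k ↔ d ∣ k / p := by
    rw [Nat.dvd_div_iff_mul_dvd hpk, mul_comm]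
  have hdiv : k / (d * p) = k / p / d := by
    rw [Nat.div_div_eq_div_mul, mul_comm]
  by_cases h : d ∣ k / p
  · rw [if_pos (hiff.mpr h), if_pos h, hdiv]
    by_cases hp0 : p = 0
    · subst hp0; simp
    rw [Nat.cast_div hpk (by exact_mod_cast hp0), div_div, ← Nat.cast_mul,
      mul_comm p d]
  · rw [if_neg (fun hh => h (hiff.mp hh)), if_neg h]

lemma G_lemma {n : ℕ} (hn : 0 < n) (he : 2 ∣ n) :
    2 * sigmaTerm n 1 - 3 * sigmaTerm n 2 + sigmaTerm n 4 = 0 := by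
  obtain ⟨m, rfl⟩ := he
  have hm : 0 < m := by omega
  have hd1 : (2 * m) / 1 = 2 * m := Nat.div_one _
  have hd2 : (2 * m) / 2 = m := by omega
  rw [sigmaTerm_dvd (one_dvd _), sigmaTerm_dvd ⟨m, rfl⟩, hd1, hd2]
  rcases Nat.even_or_odd m with hev | hod
  · obtain ⟨t, rfl⟩ := hev
    have ht : 0 < t := by omega
    have h4 : (4:ℕ) ∣ 2 * (t + t) := ⟨t, by ring⟩
    have hd4 : (2 * (t + t)) / 4 = t := by omega
    rw [sigmaTerm_dvd h4, hd4]
    have hB := sigma1_B t ht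
    have e1 : 2 * (t + t) = 4 * t := by ring
    have e2 : (t:ℕ) + t = 2 * t := by ring
    rw [e1, e2]
    have ht0 : (t:ℚ) ≠ 0 := by exact_mod_cast ht.ne'
    field_simp
    linear_combination 2 * hB
  · have h4 : ¬ (4:ℕ) ∣ 2 * m := by
      rintro ⟨c, hc⟩
      exact (Nat.odd_iff.mp hod).symm.trans_ne (by omega) rfl
    rw [sigmaTerm_of_not_dvd h4]
    have hA := sigma1_A hod
    have hm0 : (m:ℚ) ≠ 0 := by exact_mod_cast hm.ne'
    field_simp
    linear_combination 2 * hA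

theorem betaP_eq_two_alphaP_or_zero (p : ℕ) (hp : p.Prime) (hpodd : Odd p)
    (k : ℕ) (hk : 0 < k) :
    (Odd k → betaP p k = 2 * alphaP p k) ∧ (Even k → betaP p k = 0) := by
  constructor
  · intro hodd
    have h2 : ¬ (2:ℕ) ∣ k := by
      rw [Nat.odd_iff] at hodd; omega
    have h4 : ¬ (4:ℕ) ∣ k := fun h => h2 (dvd_trans ⟨2, rfl⟩ h)
    have h2p : ¬ (2 * p) ∣ k := fun h => h2 ((dvd_mul_right 2 p).trans h)
    have h4p : ¬ (4 * p) ∣ k := fun h => h4 ((dvd_mul_right 4 p).trans h)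
    unfold betaP alphaP
    rw [sigmaTerm_of_not_dvd h2, sigmaTerm_of_not_dvd h4,
      sigmaTerm_of_not_dvd h2p, sigmaTerm_of_not_dvd h4p]
    ring
  · intro hev
    have he : 2 ∣ k := hev.two_dvd
    have hG := G_lemma hk he
    unfold betaP
    by_cases hpk : p ∣ k
    · have hs1 : sigmaTerm k p = sigmaTerm (k / p) 1 := by
        have := sigmaTerm_mul_right hpk 1
        rwa [one_mul] at this
      rw [hs1, sigmaTerm_mul_right hpk 2, sigmaTerm_mul_right hpk 4]
      have hkp2 : 2 ∣ k / p := by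
        have hco : Nat.Coprime 2 p := Nat.coprime_two_left.mpr hpodd
        obtain ⟨s, rfl⟩ := hpk
        rw [Nat.mul_div_cancel_left s hp.pos]
        exact Nat.Coprime.dvd_of_dvd_mul_left hco he
      have hkp : 0 < k / p := Nat.div_pos (Nat.le_of_dvd hk hpk) hp.pos
      have hG2 := G_lemma hkp hkp2
      linarith
    · have h2p : ¬ (2 * p) ∣ k := fun h => hpk ((dvd_mul_left p 2).trans h)
      have h4p : ¬ (4 * p) ∣ k := fun h => hpk ((dvd_mul_left p 4).trans h)
      rw [sigmaTerm_of_not_dvd hpk, sigmaTerm_of_not_dvd h2p,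
        sigmaTerm_of_not_dvd h4p]
      linarith
end

section
/- Let n be a positive integer. In the ring of formal power series ℚ⟦q⟧ one has the identity Π_{M≥1} (1−q^M)^n · (1−q^{4M})^{2n} = (Π_{M≥1} (1−q^{2M})^{3n}) · (1 + Σ_{l≥1} (Σ_{J ∈ J[l]} (−n)^{|J|}·W(J)) · q^l). -/
open Finset PowerSeries

/-- α(k) = σ₁(k)/k − 3σ₁(k/2)/(k/2) + 2σ₁(k/4)/(k/4). -/
noncomputable def alphaF (k : ℕ) : ℚ :=
  sigmaTerm k 1 - 3 * sigmaTerm k 2 + 2 * sigmaTerm k 4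

/-- The multiplicity j_k of the part k in the partition J. -/
def mult {N : ℕ} (J : N.Partition) (k : ℕ) : ℕ := Multiset.count k J.parts

/-- |J| = Σ_k j_k. -/
def normJ {N : ℕ} (J : N.Partition) : ℕ := Multiset.card J.parts

/-- W(J) = Π_{k≥1} α(k)^{j_k}/j_k!. -/
noncomputable def WJ {N : ℕ} (J : N.Partition) : ℚ :=
  ∏ k ∈ J.parts.toFinset, alphaF k ^ mult J k / (Nat.factorial (mult J k))

/-- The infinite product Π_{M≥1} f(M) of formal power series. Each factor below is
of the form f(M) = 1 + O(q^M), so for each fixed coefficient the finite partial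
products stabilize: the coefficient of q^d of the infinite product is the
coefficient of q^d of Π_{M=1}^{d} f(M). -/
noncomputable def infProd (f : ℕ → PowerSeries ℚ) : PowerSeries ℚ :=
  PowerSeries.mk fun d => PowerSeries.coeff d (∏ M ∈ Finset.Icc 1 d, f M)


lemma dvd_prod_sub_one {s : Finset ℕ} {f : ℕ → PowerSeries ℚ} {c : ℕ}
    (h : ∀ M ∈ s, (X : PowerSeries ℚ)^c ∣ f M - 1) :
    (X : PowerSeries ℚ)^c ∣ (∏ M ∈ s, f M) - 1 := by
  classical
  induction s using Finset.induction with
  | empty => simp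
  | @insert j s hjs ih =>
    rw [Finset.prod_insert hjs]
    have h1 : (X : PowerSeries ℚ)^c ∣ f j - 1 := h j (mem_insert_self j s)
    have h2 := ih fun M hM => h M (mem_insert_of_mem hM)
    have : f j * ∏ M ∈ s, f M - 1 = (f j - 1) * ∏ M ∈ s, f M + ((∏ M ∈ s, f M) - 1) := by ring
    rw [this]
    exact dvd_add (h1.mul_right _) h2

lemma coeff_mul_sub_one {A B : PowerSeries ℚ} {i : ℕ}
    (h : (X : PowerSeries ℚ)^(i+1) ∣ B - 1) :
    PowerSeries.coeff i (A * B) = PowerSeries.coeff i A := by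
  have : A * B = A + A * (B - 1) := by ring
  rw [this, map_add]
  have h2 : (X : PowerSeries ℚ)^(i+1) ∣ A * (B - 1) := Dvd.dvd.mul_left h A
  rw [X_pow_dvd_iff] at h2
  rw [h2 i (Nat.lt_succ_self i), add_zero]

lemma coeff_prod_stable {f : ℕ → PowerSeries ℚ}
    (h : ∀ M, 1 ≤ M → (X : PowerSeries ℚ)^M ∣ f M - 1) {i d : ℕ} (hid : i ≤ d) :
    PowerSeries.coeff i (∏ M ∈ Finset.Icc 1 d, f M) = PowerSeries.coeff i (infProd f) := by
  have key : ∀ d', i ≤ d' → PowerSeries.coeff i (∏ M ∈ Finset.Icc 1 d', f M)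
      = PowerSeries.coeff i (∏ M ∈ Finset.Icc 1 i, f M) := by
    intro d' hd'
    have hsplit : Finset.Icc 1 d' = Finset.Icc 1 i ∪ Finset.Icc (i+1) d' := by
      ext x; simp only [Finset.mem_Icc, Finset.mem_union]; omega
    have hdisj : Disjoint (Finset.Icc 1 i) (Finset.Icc (i+1) d') := by
      simp only [Finset.disjoint_left, Finset.mem_Icc]; omega
    rw [hsplit, Finset.prod_union hdisj]
    apply coeff_mul_sub_one
    apply dvd_prod_sub_one
    intro M hM
    simp only [Finset.mem_Icc] at hM
    exact dvd_trans (pow_dvd_pow _ hM.1) (h M (by omega))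
  rw [key d hid, infProd, coeff_mk, key i le_rfl]

lemma infProd_mul {f g : ℕ → PowerSeries ℚ}
    (hf : ∀ M, 1 ≤ M → (X : PowerSeries ℚ)^M ∣ f M - 1)
    (hg : ∀ M, 1 ≤ M → (X : PowerSeries ℚ)^M ∣ g M - 1) :
    infProd (fun M => f M * g M) = infProd f * infProd g := by
  ext d
  rw [infProd, coeff_mk, Finset.prod_mul_distrib, coeff_mul, coeff_mul]
  apply Finset.sum_congr rfl
  intro p hp
  rw [Finset.HasAntidiagonal.mem_antidiagonal] at hp
  rw [coeff_prod_stable hf (by omega : p.1 ≤ d), coeff_prod_stable hg (by omega : p.2 ≤ d)]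

/-- weight of a multiset of parts -/
noncomputable def aW (a : ℕ → ℚ) (s : Multiset ℕ) : ℚ :=
  ∏ k ∈ s.toFinset, a k ^ s.count k / (Nat.factorial (s.count k))

lemma aW_cons (a : ℕ → ℚ) (k : ℕ) (s : Multiset ℕ) :
    aW a (k ::ₘ s) * ((s.count k : ℚ) + 1) = a k * aW a s := by
  classical
  unfold aW
  by_cases hk : k ∈ s.toFinset
  · have h1 : (k ::ₘ s).toFinset = s.toFinset := by
      rw [Multiset.toFinset_cons, Finset.insert_eq_self.2 hk]
    rw [h1, ← Finset.mul_prod_erase s.toFinset _ hk, ← Finset.mul_prod_erase s.toFinset _ hk]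
    have h2 : ∀ j ∈ s.toFinset.erase k,
        a j ^ (k ::ₘ s).count j / (Nat.factorial ((k ::ₘ s).count j))
          = a j ^ s.count j / (Nat.factorial (s.count j)) := by
      intro j hj
      rw [Multiset.count_cons_of_ne (Finset.ne_of_mem_erase hj) s]
    rw [Finset.prod_congr rfl h2, Multiset.count_cons_self]
    have h3 : (Nat.factorial (s.count k + 1) : ℚ) = (Nat.factorial (s.count k)) * (s.count k + 1) := by
      rw [Nat.factorial_succ]; push_cast; ring
    field_simp [h3, Nat.factorial_ne_zero]
    rw [h3]; ring
  · have hks : k ∉ s := fun h => hk (Multiset.mem_toFinset.2 h)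
    have hc : s.count k = 0 := Multiset.count_eq_zero.2 hks
    have h1 : (k ::ₘ s).toFinset = insert k s.toFinset := Multiset.toFinset_cons k s
    rw [h1, Finset.prod_insert hk]
    have h2 : ∀ j ∈ s.toFinset,
        a j ^ (k ::ₘ s).count j / (Nat.factorial ((k ::ₘ s).count j))
          = a j ^ s.count j / (Nat.factorial (s.count j)) := by
      intro j hj
      have : j ≠ k := by rintro rfl; exact hk hj
      rw [Multiset.count_cons_of_ne this s]
    rw [Finset.prod_congr rfl h2, Multiset.count_cons_self, hc]
    norm_num [Nat.factorial]

/-- the finset of part-multisets of partitions of l -/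
def PS (l : ℕ) : Finset (Multiset ℕ) :=
  (Finset.univ : Finset (Nat.Partition l)).image Nat.Partition.parts

lemma mem_PS {l : ℕ} {s : Multiset ℕ} :
    s ∈ PS l ↔ (∀ i ∈ s, 0 < i) ∧ s.sum = l := by
  constructor
  · rintro h
    rw [PS, Finset.mem_image] at h
    obtain ⟨J, _, rfl⟩ := h
    exact ⟨fun i hi => J.parts_pos hi, J.parts_sum⟩
  · rintro ⟨h1, h2⟩
    rw [PS, Finset.mem_image]
    exact ⟨⟨s, fun hi => h1 _ hi, h2⟩, Finset.mem_univ _, rfl⟩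

noncomputable def EC (a : ℕ → ℚ) (l : ℕ) : ℚ := ∑ s ∈ PS l, aW a s

lemma sum_partition_eq (a : ℕ → ℚ) (l : ℕ) :
    ∑ J : Nat.Partition l, aW a J.parts = EC a l := by
  rw [EC, PS, Finset.sum_image]
  intro x _ y _ h
  exact Nat.Partition.ext h

lemma multiset_sum_eq (s : Multiset ℕ) : s.sum = ∑ k ∈ s.toFinset, s.count k * k := by
  conv_lhs => rw [← Multiset.map_id s]
  rw [Finset.sum_multiset_map_count]
  simp [smul_eq_mul]

lemma EC_rec (a : ℕ → ℚ) (l : ℕ) (hl : 1 ≤ l) :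
    (l : ℚ) * EC a l = ∑ i ∈ Finset.range l, ((i+1 : ℕ) : ℚ) * a (i+1) * EC a (l-1-i) := by
  classical
  have lhs_eq : (l : ℚ) * EC a l
      = ∑ x ∈ (PS l).sigma (fun s => s.toFinset), ((x.2 : ℚ) * x.1.count x.2) * aW a x.1 := by
    rw [Finset.sum_sigma, EC, Finset.mul_sum]
    apply Finset.sum_congr rfl
    intro s hs
    dsimp only
    rw [← Finset.sum_mul]
    congr 1
    have hsum : s.sum = l := (mem_PS.1 hs).2
    have : ((l : ℕ) : ℚ) = ((∑ k ∈ s.toFinset, s.count k * k : ℕ) : ℚ) := by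
      rw [← multiset_sum_eq, hsum]
    rw [this]
    push_cast
    apply Finset.sum_congr rfl
    intro k _
    ring
  have rhs_eq : ∑ i ∈ Finset.range l, ((i+1 : ℕ) : ℚ) * a (i+1) * EC a (l-1-i)
      = ∑ x ∈ (Finset.range l).sigma (fun i => PS (l-1-i)),
          ((x.1+1 : ℕ) : ℚ) * a (x.1+1) * aW a x.2 := by
    rw [Finset.sum_sigma]
    apply Finset.sum_congr rfl
    intro i _
    rw [EC, Finset.mul_sum]
  rw [lhs_eq, rhs_eq]
  apply Finset.sum_nbij' (fun x => (⟨x.2 - 1, x.1.erase x.2⟩ : (_ : ℕ) × Multiset ℕ))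
    (fun x => (⟨(x.1+1) ::ₘ x.2, x.1+1⟩ : (_ : Multiset ℕ) × ℕ))
  · rintro ⟨s, k⟩ hx
    rw [Finset.mem_sigma] at hx
    obtain ⟨hs, hk⟩ := hx
    dsimp only at hs hk
    rw [mem_PS] at hs
    rw [Multiset.mem_toFinset] at hk
    have hkpos : 0 < k := hs.1 k hk
    have hksum : k ≤ l := le_of_le_of_eq (Multiset.le_sum_of_mem hk) hs.2
    show (⟨k - 1, s.erase k⟩ : (_ : ℕ) × Multiset ℕ) ∈ (Finset.range l).sigma (fun i => PS (l-1-i))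
    rw [Finset.mem_sigma]
    dsimp only
    constructor
    · rw [Finset.mem_range]; omega
    · rw [mem_PS]
      constructor
      · intro i hi
        exact hs.1 i (Multiset.mem_of_mem_erase hi)
      · have h5 : k + (s.erase k).sum = s.sum := by
          rw [← Multiset.sum_cons, Multiset.cons_erase hk]
        have h6 := hs.2
        omega
  · rintro ⟨i, s⟩ hx
    rw [Finset.mem_sigma] at hx
    obtain ⟨hi, hs⟩ := hx
    dsimp only at hi hs
    rw [Finset.mem_range] at hi
    rw [mem_PS] at hs
    show (⟨(i+1) ::ₘ s, i+1⟩ : (_ : Multiset ℕ) × ℕ) ∈ (PS l).sigma (fun s => s.toFinset)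
    rw [Finset.mem_sigma]
    dsimp only
    constructor
    · rw [mem_PS]
      constructor
      · intro j hj
        rcases Multiset.mem_cons.1 hj with h | h
        · omega
        · exact hs.1 j h
      · rw [Multiset.sum_cons, hs.2]; omega
    · simp
  · rintro ⟨s, k⟩ hx
    rw [Finset.mem_sigma] at hx
    obtain ⟨hs, hk⟩ := hx
    dsimp only at hs hk
    rw [mem_PS] at hs
    rw [Multiset.mem_toFinset] at hk
    have hkpos : 0 < k := hs.1 k hk
    show (⟨(k-1+1) ::ₘ s.erase k, k-1+1⟩ : (_ : Multiset ℕ) × ℕ) = ⟨s, k⟩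
    have h1 : k - 1 + 1 = k := by omega
    rw [h1, Multiset.cons_erase hk]
  · rintro ⟨i, s⟩ _
    simp [Multiset.erase_cons_head]
  · rintro ⟨s, k⟩ hx
    rw [Finset.mem_sigma] at hx
    obtain ⟨hs, hk⟩ := hx
    dsimp only at hs hk
    rw [mem_PS] at hs
    rw [Multiset.mem_toFinset] at hk
    have hkpos : 0 < k := hs.1 k hk
    show (k : ℚ) * s.count k * aW a s = ((k-1+1 : ℕ) : ℚ) * a (k-1+1) * aW a (s.erase k)
    have h1 : k - 1 + 1 = k := by omega
    rw [h1]
    have key := aW_cons a k (s.erase k)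
    rw [Multiset.cons_erase hk] at key
    have hcount : s.count k = (s.erase k).count k + 1 := by
      rw [Multiset.count_erase_self]
      have : 0 < s.count k := Multiset.count_pos.2 hk
      omega
    have hc2 : ((Multiset.count k s : ℕ) : ℚ) = (Multiset.count k (s.erase k) : ℚ) + 1 := by
      rw [hcount]; push_cast; ring
    rw [hc2]
    linear_combination (k : ℚ) * key

noncomputable def G (m : ℕ) : PowerSeries ℚ :=
  PowerSeries.mk fun i => if m ∣ i then 1 else 0

lemma G_mul {m : ℕ} (hm : 1 ≤ m) : (1 - (X : PowerSeries ℚ)^m) * G m = 1 := by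
  ext d
  rw [sub_mul, one_mul, map_sub]
  rcases Nat.lt_or_ge d m with h | h
  · have h1 : PowerSeries.coeff d ((X : PowerSeries ℚ)^m * G m) = 0 := by
      have : (X : PowerSeries ℚ)^m ∣ (X : PowerSeries ℚ)^m * G m := Dvd.intro _ rfl
      exact (X_pow_dvd_iff.1 this) d h
    rw [h1, sub_zero, G, coeff_mk]
    rcases Nat.eq_zero_or_pos d with rfl | hd
    · simp
    · have : ¬ m ∣ d := Nat.not_dvd_of_pos_of_lt hd h
      rw [if_neg this, coeff_one, if_neg (by omega : ¬ d = 0)]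
  · obtain ⟨e, rfl⟩ := Nat.exists_eq_add_of_le h
    rw [show m + e = e + m by omega, coeff_X_pow_mul (G m) m e, G, coeff_mk, coeff_mk]
    have hme : m ∣ e + m ↔ m ∣ e := by
      constructor
      · intro h'; exact (Nat.dvd_add_left (dvd_refl m)).1 h'
      · intro h'; exact Nat.dvd_add h' (dvd_refl m)
    have hd0 : ¬ (e + m = 0) := by omega
    by_cases h2 : m ∣ e
    · simp [hme.2 h2, h2, coeff_one, hd0]; omega
    · simp [fun h' => h2 (hme.1 h'), h2, coeff_one, hd0]; omega

lemma X_pow_dvd_G_sub_one {m : ℕ} (hm : 1 ≤ m) :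
    (X : PowerSeries ℚ)^m ∣ G m - 1 := by
  rw [X_pow_dvd_iff]
  intro i hi
  rw [map_sub, G, coeff_mk]
  rcases Nat.eq_zero_or_pos i with rfl | hipos
  · simp
  · have : ¬ m ∣ i := Nat.not_dvd_of_pos_of_lt hipos hi
    simp [this, coeff_one]
    omega

lemma coeff_X_pow_G {m : ℕ} (hm : 1 ≤ m) (i : ℕ) :
    PowerSeries.coeff i ((X : PowerSeries ℚ)^(m-1) * G m) = if m ∣ (i+1) then 1 else 0 := by
  rcases Nat.lt_or_ge i (m-1) with h | h
  · have h1 : PowerSeries.coeff i ((X : PowerSeries ℚ)^(m-1) * G m) = 0 := by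
      have : (X : PowerSeries ℚ)^(m-1) ∣ _ := Dvd.intro (G m) rfl
      exact (X_pow_dvd_iff.1 this) i h
    have h2 : ¬ m ∣ (i + 1) := Nat.not_dvd_of_pos_of_lt (by omega) (by omega)
    rw [h1, if_neg h2]
  · obtain ⟨e, he⟩ := Nat.exists_eq_add_of_le h
    rw [he, show m - 1 + e = e + (m-1) by omega, coeff_X_pow_mul (G m) (m-1) e, G, coeff_mk]
    have : m ∣ (e + (m - 1) + 1) ↔ m ∣ e := by
      have hh : e + (m - 1) + 1 = e + m := by omega
      rw [hh]
      constructor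
      · intro h'; exact (Nat.dvd_add_left (dvd_refl m)).1 h'
      · intro h'; exact Nat.dvd_add h' (dvd_refl m)
    simp [this]

lemma deriv_X_pow (m : ℕ) : (d⁄dX ℚ) ((X : PowerSeries ℚ)^m) = (m : PowerSeries ℚ) * X^(m-1) := by
  rw [Derivation.leibniz_pow, derivative_X, smul_eq_mul, mul_one, nsmul_eq_mul]

lemma deriv_one_sub_X_pow (m : ℕ) :
    (d⁄dX ℚ) (1 - (X : PowerSeries ℚ)^m) = -((m : PowerSeries ℚ) * X^(m-1)) := by
  rw [map_sub, deriv_X_pow]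
  simp

lemma deriv_G {m : ℕ} (hm : 1 ≤ m) :
    (d⁄dX ℚ) (G m) = (m : PowerSeries ℚ) * X^(m-1) * (G m)^2 := by
  have h0 := G_mul hm
  have h1 : (d⁄dX ℚ) ((1 - (X : PowerSeries ℚ)^m) * G m) = 0 := by rw [h0]; simp
  rw [Derivation.leibniz, smul_eq_mul, smul_eq_mul, deriv_one_sub_X_pow] at h1
  -- h1 : (1-X^m) * dG + G m * -(m X^{m-1}) = 0
  have h2 : (d⁄dX ℚ) (G m) = G m * ((1 - (X : PowerSeries ℚ)^m) * (d⁄dX ℚ) (G m)) := by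
    rw [← mul_assoc, mul_comm (G m), h0, one_mul]
  have h3 : (1 - (X : PowerSeries ℚ)^m) * (d⁄dX ℚ) (G m)
      = (m : PowerSeries ℚ) * X^(m-1) * G m := by
    linear_combination h1
  rw [h2, h3]; ring

lemma deriv_prod {s : Finset ℕ} {f c : ℕ → PowerSeries ℚ}
    (h : ∀ M ∈ s, (d⁄dX ℚ) (f M) = c M * f M) :
    (d⁄dX ℚ) (∏ M ∈ s, f M) = (∑ M ∈ s, c M) * ∏ M ∈ s, f M := by
  classical
  induction s using Finset.induction with
  | empty => simp
  | @insert j s hjs ih =>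
    rw [Finset.prod_insert hjs, Finset.sum_insert hjs, Derivation.leibniz, smul_eq_mul,
      smul_eq_mul, h j (mem_insert_self j s), ih (fun M hM => h M (mem_insert_of_mem hM))]
    ring

noncomputable def eF (n M : ℕ) : PowerSeries ℚ :=
  (1 - (X : PowerSeries ℚ)^M)^n * (1 - (X : PowerSeries ℚ)^(4*M))^(2*n) * (G (2*M))^(3*n)

noncomputable def cF (n M : ℕ) : PowerSeries ℚ :=
  -((n : PowerSeries ℚ) * (M : PowerSeries ℚ) * ((X : PowerSeries ℚ)^(M-1) * G M))
  - 8 * (n : PowerSeries ℚ) * (M : PowerSeries ℚ) * ((X : PowerSeries ℚ)^(4*M-1) * G (4*M))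
  + 6 * (n : PowerSeries ℚ) * (M : PowerSeries ℚ) * ((X : PowerSeries ℚ)^(2*M-1) * G (2*M))

lemma pow_absorb {u g : PowerSeries ℚ} {n : ℕ} (hn : 1 ≤ n) (h : u * g = 1) :
    u^(n-1) = u^n * g := by
  have h1 : u^n = u^(n-1) * u := (pow_sub_one_mul (by omega) u).symm
  rw [h1, mul_assoc, h, mul_one]

lemma deriv_eF (n M : ℕ) (hn : 1 ≤ n) (hM : 1 ≤ M) :
    (d⁄dX ℚ) (eF n M) = cF n M * eF n M := by
  have hgw : (1 - (X : PowerSeries ℚ)^(2*M)) * G (2*M) = 1 := G_mul (by omega)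
  have hu : (1 - (X : PowerSeries ℚ)^M)^(n-1) = (1 - X^M)^n * G M :=
    pow_absorb hn (G_mul hM)
  have hv : (1 - (X : PowerSeries ℚ)^(4*M))^(2*n-1) = (1 - X^(4*M))^(2*n) * G (4*M) :=
    pow_absorb (by omega) (G_mul (by omega))
  have hg : (G (2*M))^(3*n-1) = (G (2*M))^(3*n) * (1 - (X : PowerSeries ℚ)^(2*M)) :=
    pow_absorb (by omega) (by rw [mul_comm]; exact hgw)
  unfold eF cF
  rw [Derivation.leibniz, Derivation.leibniz, Derivation.leibniz_pow, Derivation.leibniz_pow,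
    Derivation.leibniz_pow, deriv_one_sub_X_pow, deriv_one_sub_X_pow, deriv_G (by omega : 1 ≤ 2*M)]
  simp only [smul_eq_mul, nsmul_eq_mul]
  rw [hu, hv, hg]
  push_cast
  linear_combination (6*(n : PowerSeries ℚ)*(M : PowerSeries ℚ)*(X : PowerSeries ℚ)^(2*M-1)
    * (1 - (X : PowerSeries ℚ)^M)^n * (1 - (X : PowerSeries ℚ)^(4*M))^(2*n)
    * (G (2*M))^(3*n+1)) * hgw


lemma divisor_sum (c k l : ℕ) (hc : 1 ≤ c) (hk : 1 ≤ k) (hkl : k ≤ l) :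
    ∑ M ∈ Finset.Icc 1 l, (if c*M ∣ k then (M : ℚ) else 0)
      = if c ∣ k then ((sigma1 (k/c) : ℕ) : ℚ) else 0 := by
  by_cases hcd : c ∣ k
  · obtain ⟨k', rfl⟩ := hcd
    have hk' : 1 ≤ k' := by
      rcases Nat.eq_zero_or_pos k' with rfl | h
      · omega
      · omega
    have hdvd : ∀ M, c * M ∣ c * k' ↔ M ∣ k' := fun M =>
      mul_dvd_mul_iff_left (by omega : c ≠ 0)
    have hce : c * k' / c = k' := Nat.mul_div_cancel_left k' (by omega)
    rw [if_pos (Dvd.intro k' rfl), hce]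
    simp only [hdvd]
    rw [← Finset.sum_filter]
    have hfe : (Finset.Icc 1 l).filter (· ∣ k') = k'.divisors := by
      ext M
      simp only [Finset.mem_filter, Finset.mem_Icc, Nat.mem_divisors]
      constructor
      · rintro ⟨⟨h1, h2⟩, h3⟩; exact ⟨h3, by omega⟩
      · rintro ⟨h1, h2⟩
        have hM1 : 1 ≤ M := Nat.pos_of_dvd_of_pos h1 (by omega)
        have hM2 : M ≤ k' := Nat.le_of_dvd (by omega) h1
        have : k' ≤ l := le_trans (Nat.le_mul_of_pos_left k' (by omega)) hkl
        exact ⟨⟨hM1, by omega⟩, h1⟩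
    rw [hfe, sigma1]
    push_cast
    rfl
  · rw [if_neg hcd]
    apply Finset.sum_eq_zero
    intro M _
    rw [if_neg (fun h => hcd (dvd_trans (Dvd.intro M rfl) h))]

/-- the coefficient sequence of the logarithmic derivative -/
noncomputable def bb (n k : ℕ) : ℚ :=
  -(n : ℚ) * ((sigma1 k : ℚ) - 6 * (if 2 ∣ k then ((sigma1 (k/2) : ℕ) : ℚ) else 0)
    + 8 * (if 4 ∣ k then ((sigma1 (k/4) : ℕ) : ℚ) else 0))

lemma coeff_cF (n M i : ℕ) (hM : 1 ≤ M) :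
    PowerSeries.coeff i (cF n M)
      = -((n:ℚ)*M) * (if M ∣ (i+1) then 1 else 0)
        - 8*(n:ℚ)*M * (if 4*M ∣ (i+1) then 1 else 0)
        + 6*(n:ℚ)*M * (if 2*M ∣ (i+1) then 1 else 0) := by
  have e1 : ((n : PowerSeries ℚ)) = PowerSeries.C ((n : ℚ)) := by
    rw [map_natCast (PowerSeries.C (R := ℚ)) n]
  have e2 : ((M : PowerSeries ℚ)) = PowerSeries.C ((M : ℚ)) := by
    rw [map_natCast (PowerSeries.C (R := ℚ)) M]
  have h8 : (8 : PowerSeries ℚ) = PowerSeries.C (8:ℚ) := (map_ofNat (PowerSeries.C (R := ℚ)) 8).symm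
  have h6 : (6 : PowerSeries ℚ) = PowerSeries.C (6:ℚ) := (map_ofNat (PowerSeries.C (R := ℚ)) 6).symm
  rw [cF]
  simp only [e1, e2, h8, h6, map_add, map_sub, map_neg, mul_assoc, coeff_C_mul,
    coeff_X_pow_G hM, coeff_X_pow_G (by omega : 1 ≤ 4*M), coeff_X_pow_G (by omega : 1 ≤ 2*M)]
  ring

lemma coeff_cF_sum (n l i : ℕ) (hi : i < l) :
    PowerSeries.coeff i (∑ M ∈ Finset.Icc 1 l, cF n M) = bb n (i+1) := by
  rw [map_sum]
  have hcomp : ∀ M ∈ Finset.Icc 1 l, PowerSeries.coeff i (cF n M)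
      = -((n:ℚ)*M) * (if M ∣ (i+1) then 1 else 0)
        - 8*(n:ℚ)*M * (if 4*M ∣ (i+1) then 1 else 0)
        + 6*(n:ℚ)*M * (if 2*M ∣ (i+1) then 1 else 0) := by
    intro M hM
    rw [Finset.mem_Icc] at hM
    exact coeff_cF n M i hM.1
  rw [Finset.sum_congr rfl hcomp]
  have hk : 1 ≤ i + 1 := by omega
  have hkl : i + 1 ≤ l := by omega
  have key : ∀ c : ℕ, 1 ≤ c → ∑ M ∈ Finset.Icc 1 l, (M:ℚ) * (if c*M ∣ (i+1) then 1 else 0)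
      = if c ∣ (i+1) then ((sigma1 ((i+1)/c) : ℕ) : ℚ) else 0 := by
    intro c hc
    rw [← divisor_sum c (i+1) l hc hk hkl]
    apply Finset.sum_congr rfl
    intro M _
    by_cases h : c * M ∣ (i+1) <;> simp [h]
  have k1 := key 1 (by omega)
  have k2 := key 2 (by omega)
  have k4 := key 4 (by omega)
  simp only [one_mul, Nat.one_dvd, if_true, Nat.div_one] at k1
  rw [Finset.sum_add_distrib, Finset.sum_sub_distrib]
  have e1 : ∑ M ∈ Finset.Icc 1 l, -((n:ℚ)*M) * (if M ∣ (i+1) then 1 else 0)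
      = -(n:ℚ) * ((sigma1 (i+1) : ℕ) : ℚ) := by
    rw [← k1, ← Finset.sum_attach (Finset.Icc 1 l)]
    rw [Finset.mul_sum, ← Finset.sum_attach (Finset.Icc 1 l)]
    apply Finset.sum_congr rfl; intro M _; ring
  have e2 : ∑ M ∈ Finset.Icc 1 l, 8*(n:ℚ)*M * (if 4*M ∣ (i+1) then 1 else 0)
      = 8*(n:ℚ) * (if 4 ∣ (i+1) then ((sigma1 ((i+1)/4) : ℕ) : ℚ) else 0) := by
    rw [← k4, Finset.mul_sum]
    apply Finset.sum_congr rfl; intro M _; ring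
  have e3 : ∑ M ∈ Finset.Icc 1 l, 6*(n:ℚ)*M * (if 2*M ∣ (i+1) then 1 else 0)
      = 6*(n:ℚ) * (if 2 ∣ (i+1) then ((sigma1 ((i+1)/2) : ℕ) : ℚ) else 0) := by
    rw [← k2, Finset.mul_sum]
    apply Finset.sum_congr rfl; intro M _; ring
  rw [e1, e2, e3, bb]
  ring

lemma X_pow_dvd_mul_sub_one {a b : PowerSeries ℚ} {c : ℕ}
    (ha : (X : PowerSeries ℚ)^c ∣ a - 1) (hb : (X : PowerSeries ℚ)^c ∣ b - 1) :
    (X : PowerSeries ℚ)^c ∣ a * b - 1 := by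
  have : a * b - 1 = (a - 1) * b + (b - 1) := by ring
  rw [this]
  exact dvd_add (ha.mul_right b) hb

lemma X_pow_dvd_pow_sub_one {a : PowerSeries ℚ} {c e : ℕ}
    (ha : (X : PowerSeries ℚ)^c ∣ a - 1) :
    (X : PowerSeries ℚ)^c ∣ a^e - 1 := by
  have h := sub_dvd_pow_sub_pow a 1 e
  rw [one_pow] at h
  exact dvd_trans ha h

lemma X_pow_dvd_eF_sub_one (n : ℕ) : ∀ M, 1 ≤ M →
    (X : PowerSeries ℚ)^M ∣ eF n M - 1 := by
  intro M hM
  rw [eF]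
  apply X_pow_dvd_mul_sub_one
  apply X_pow_dvd_mul_sub_one
  · exact X_pow_dvd_pow_sub_one (by rw [sub_sub_cancel_left]; exact (dvd_neg).2 dvd_rfl)
  · apply X_pow_dvd_pow_sub_one
    rw [sub_sub_cancel_left]
    exact (dvd_neg).2 (pow_dvd_pow _ (by omega : M ≤ 4*M))
  · apply X_pow_dvd_pow_sub_one
    exact dvd_trans (pow_dvd_pow _ (by omega : M ≤ 2*M)) (X_pow_dvd_G_sub_one (by omega))

lemma prod_rec (n l : ℕ) (hn : 1 ≤ n) (hl : 1 ≤ l) :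
    (l : ℚ) * PowerSeries.coeff l (infProd (eF n)) =
      ∑ i ∈ Finset.range l, bb n (i+1) * PowerSeries.coeff (l-1-i) (infProd (eF n)) := by
  set Q := ∏ M ∈ Finset.Icc 1 l, eF n M with hQ
  have hd : (d⁄dX ℚ) Q = (∑ M ∈ Finset.Icc 1 l, cF n M) * Q := by
    apply deriv_prod
    intro M hM
    rw [Finset.mem_Icc] at hM
    exact deriv_eF n M hn hM.1
  have h2 : PowerSeries.coeff (l-1) ((d⁄dX ℚ) Q) = PowerSeries.coeff l Q * l := by
    rw [coeff_derivative, show l - 1 + 1 = l by omega, Nat.cast_sub hl]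
    push_cast
    ring
  have h3 : PowerSeries.coeff l (infProd (eF n)) = PowerSeries.coeff l Q :=
    (coeff_prod_stable (X_pow_dvd_eF_sub_one n) (le_refl l)).symm
  rw [h3, mul_comm, ← h2, hd, coeff_mul]
  rw [Finset.Nat.sum_antidiagonal_eq_sum_range_succ_mk, Nat.succ_eq_add_one,
    show l - 1 + 1 = l by omega]
  apply Finset.sum_congr rfl
  intro i hi
  rw [Finset.mem_range] at hi
  rw [coeff_cF_sum n l i hi, coeff_prod_stable (X_pow_dvd_eF_sub_one n) (by omega : l-1-i ≤ l)]

lemma rec_unique (b P Q : ℕ → ℚ) (h0 : P 0 = Q 0)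
    (hP : ∀ l : ℕ, 1 ≤ l → (l:ℚ) * P l = ∑ i ∈ Finset.range l, b (i+1) * P (l-1-i))
    (hQ : ∀ l : ℕ, 1 ≤ l → (l:ℚ) * Q l = ∑ i ∈ Finset.range l, b (i+1) * Q (l-1-i)) :
    ∀ l, P l = Q l := by
  intro l
  induction l using Nat.strong_induction_on with
  | _ l ih =>
    rcases Nat.eq_zero_or_pos l with rfl | hl
    · exact h0
    · have hl' : (l : ℚ) ≠ 0 := by positivity
      have e1 := hP l hl
      have e2 := hQ l hl
      have e3 : ∑ i ∈ Finset.range l, b (i+1) * P (l-1-i)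
          = ∑ i ∈ Finset.range l, b (i+1) * Q (l-1-i) := by
        apply Finset.sum_congr rfl
        intro i hi
        rw [Finset.mem_range] at hi
        rw [ih (l-1-i) (by omega)]
      have := e1.trans (e3.trans e2.symm)
      field_simp at this
      linarith

lemma bb_eq (n k : ℕ) (hk : 1 ≤ k) : bb n k = (k : ℚ) * (-(n:ℚ) * alphaF k) := by
  have h1 : (k : ℚ) * sigmaTerm k 1 = (sigma1 k : ℚ) := by
    rw [sigmaTerm, if_pos (one_dvd k), Nat.div_one]
    field_simp; simp
  have h2 : (k : ℚ) * sigmaTerm k 2 = if 2 ∣ k then 2 * ((sigma1 (k/2) : ℕ) : ℚ) else 0 := by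
    rw [sigmaTerm]
    by_cases h : 2 ∣ k
    · rw [if_pos h, if_pos h]
      have hk2 : 1 ≤ k / 2 := Nat.one_le_div_iff (by omega) |>.2 (Nat.le_of_dvd (by omega) h)
      have hcast : (k : ℚ) = 2 * ((k/2 : ℕ) : ℚ) := by
        rw [← Nat.cast_ofNat, ← Nat.cast_mul, Nat.mul_div_cancel' h]
      rw [hcast]
      have : ((k/2 : ℕ) : ℚ) ≠ 0 := by positivity
      field_simp
      ring
    · rw [if_neg h, if_neg h, mul_zero]
  have h4 : (k : ℚ) * sigmaTerm k 4 = if 4 ∣ k then 4 * ((sigma1 (k/4) : ℕ) : ℚ) else 0 := by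
    rw [sigmaTerm]
    by_cases h : 4 ∣ k
    · rw [if_pos h, if_pos h]
      have hk4 : 1 ≤ k / 4 := Nat.one_le_div_iff (by omega) |>.2 (Nat.le_of_dvd (by omega) h)
      have hcast : (k : ℚ) = 4 * ((k/4 : ℕ) : ℚ) := by
        rw [← Nat.cast_ofNat, ← Nat.cast_mul, Nat.mul_div_cancel' h]
      rw [hcast]
      have : ((k/4 : ℕ) : ℚ) ≠ 0 := by positivity
      field_simp
      ring
    · rw [if_neg h, if_neg h, mul_zero]
  rw [bb, alphaF]
  have expand : (k : ℚ) * (-(n:ℚ) * (sigmaTerm k 1 - 3 * sigmaTerm k 2 + 2 * sigmaTerm k 4))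
      = -(n:ℚ) * (((k:ℚ) * sigmaTerm k 1) - 3 * ((k:ℚ) * sigmaTerm k 2)
          + 2 * ((k:ℚ) * sigmaTerm k 4)) := by ring
  rw [expand, h1, h2, h4]
  by_cases h2d : 2 ∣ k <;> by_cases h4d : 4 ∣ k <;>
    simp only [if_pos, if_neg, h2d, h4d, if_true, if_false] <;> ring

lemma EC_zero (a : ℕ → ℚ) : EC a 0 = 1 := by
  have hPS : PS 0 = {(0 : Multiset ℕ)} := by
    ext s
    rw [mem_PS, Finset.mem_singleton]
    constructor
    · rintro ⟨h1, h2⟩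
      rw [Multiset.eq_zero_iff_forall_notMem]
      intro x hx
      have := h1 x hx
      have hle : x ≤ s.sum := Multiset.le_sum_of_mem hx
      omega
    · rintro rfl
      exact ⟨fun i hi => absurd hi (Multiset.notMem_zero i), rfl⟩
  rw [EC, hPS, Finset.sum_singleton, aW]
  simp

lemma coeff_zero_infProd (f : ℕ → PowerSeries ℚ) :
    PowerSeries.coeff 0 (infProd f) = 1 := by
  rw [infProd, coeff_mk]
  simp

lemma WJ_eq (n : ℕ) {l : ℕ} (J : Nat.Partition l) :
    (-(n:ℚ)) ^ normJ J * WJ J = aW (fun k => -(n:ℚ) * alphaF k) J.parts := by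
  rw [WJ, normJ, aW]
  have h1 : ∀ k ∈ J.parts.toFinset,
      (fun k => -(n:ℚ) * alphaF k) k ^ J.parts.count k / (Nat.factorial (J.parts.count k))
        = (-(n:ℚ)) ^ J.parts.count k * (alphaF k ^ J.parts.count k / (Nat.factorial (J.parts.count k))) := by
    intro k _
    rw [mul_pow]
    ring
  rw [Finset.prod_congr rfl h1, Finset.prod_mul_distrib, Finset.prod_pow_eq_pow_sum,
    Multiset.toFinset_sum_count_eq]
  rfl

lemma S_eq (n l : ℕ) :
    (if l = 0 then (1:ℚ) else ∑ J : Nat.Partition l, (-(n : ℚ)) ^ normJ J * WJ J)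
      = EC (fun k => -(n:ℚ) * alphaF k) l := by
  rcases Nat.eq_zero_or_pos l with rfl | hl
  · rw [if_pos rfl, EC_zero]
  · rw [if_neg (by omega)]
    rw [← sum_partition_eq (fun k => -(n:ℚ) * alphaF k) l]
    apply Finset.sum_congr rfl
    intro J _
    exact WJ_eq n J

lemma infProd_eF_eq (n : ℕ) (hn : 1 ≤ n) :
    infProd (eF n) = PowerSeries.mk (fun l => EC (fun k => -(n:ℚ) * alphaF k) l) := by
  ext d
  rw [coeff_mk]
  refine rec_unique (bb n) (fun d => PowerSeries.coeff d (infProd (eF n)))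
    (EC (fun k => -(n:ℚ) * alphaF k)) ?_ ?_ ?_ d
  · show PowerSeries.coeff 0 (infProd (eF n)) = EC (fun k => -(n:ℚ) * alphaF k) 0
    rw [coeff_zero_infProd, EC_zero]
  · intro l hl
    exact prod_rec n l hn hl
  · intro l hl
    rw [EC_rec (fun k => -(n:ℚ) * alphaF k) l hl]
    apply Finset.sum_congr rfl
    intro i _
    rw [bb_eq n (i+1) (by omega)]

theorem product_expansion (n : ℕ) (hn : 0 < n) :
    infProd (fun M => (1 - (X : PowerSeries ℚ) ^ M) ^ n * (1 - (X : PowerSeries ℚ) ^ (4 * M)) ^ (2 * n))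
      = infProd (fun M => (1 - (X : PowerSeries ℚ) ^ (2 * M)) ^ (3 * n)) *
        PowerSeries.mk (fun l =>
          if l = 0 then 1 else ∑ J : l.Partition, (-(n : ℚ)) ^ normJ J * WJ J) := by
  have hn1 : 1 ≤ n := hn
  have hfact : (fun M => (1 - (X : PowerSeries ℚ) ^ M) ^ n * (1 - (X : PowerSeries ℚ) ^ (4 * M)) ^ (2 * n))
      = fun M => (1 - (X : PowerSeries ℚ) ^ (2 * M)) ^ (3 * n) * eF n M := by
    funext M
    rcases Nat.eq_zero_or_pos M with rfl | hM
    · simp only [Nat.mul_zero, pow_zero, sub_self]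
      rw [zero_pow (by omega : n ≠ 0), zero_pow (by omega : 3*n ≠ 0), zero_mul, zero_mul]
    · rw [eF]
      have hgw : (1 - (X : PowerSeries ℚ)^(2*M)) * G (2*M) = 1 := G_mul (by omega)
      calc (1 - (X : PowerSeries ℚ) ^ M) ^ n * (1 - X ^ (4 * M)) ^ (2 * n)
          = (1 - (X : PowerSeries ℚ) ^ M) ^ n * (1 - X ^ (4 * M)) ^ (2 * n)
            * ((1 - X ^ (2*M)) * G (2*M)) ^ (3*n) := by rw [hgw, one_pow, mul_one]
        _ = (1 - (X : PowerSeries ℚ) ^ (2 * M)) ^ (3 * n)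
            * ((1 - X ^ M) ^ n * (1 - X ^ (4 * M)) ^ (2 * n) * G (2 * M) ^ (3 * n)) := by
            rw [mul_pow]; ring
  rw [hfact]
  have hfR : ∀ M, 1 ≤ M → (X : PowerSeries ℚ)^M ∣ (1 - (X : PowerSeries ℚ) ^ (2 * M)) ^ (3 * n) - 1 := by
    intro M hM
    apply X_pow_dvd_pow_sub_one
    rw [sub_sub_cancel_left]
    exact (dvd_neg).2 (pow_dvd_pow _ (by omega : M ≤ 2*M))
  rw [infProd_mul hfR (X_pow_dvd_eF_sub_one n), infProd_eF_eq n hn1]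
  congr 1
  ext d
  rw [coeff_mk, coeff_mk, S_eq]
end

section
/- Let p be an odd prime, n a positive integer, and m ≥ 1. The m×m matrix A^{1,1} = (b_l(1+2h, 1))_{0≤l,h≤m−1} is nonsingular, with determinant det A^{1,1} = (−2n)^{m(m−1)/2}. -/
open Finset

/-- J_o = Σ_{k odd} j_k. -/
def oddJ {N : ℕ} (J : N.Partition) : ℕ := Multiset.card (J.parts.filter Odd)

/-- J_e = Σ_{k even} j_k. -/
def evenJ {N : ℕ} (J : N.Partition) : ℕ := Multiset.card (J.parts.filter Even)

/-- W_p(J) = Π_{k≥1} α_p(k)^{j_k}/j_k!  (the factors with j_k = 0 are 1). -/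
noncomputable def Wp (p : ℕ) {N : ℕ} (J : N.Partition) : ℚ :=
  ∏ k ∈ J.parts.toFinset, alphaP p k ^ mult J k / (Nat.factorial (mult J k))

/-- b_l(u,v) = Σ_{J ∈ J[l]} (−n)^{|J|} u^{J_o} v^{J_e} W_p(J). -/
noncomputable def bP (p n l : ℕ) (u v : ℚ) : ℚ :=
  ∑ J : l.Partition, (-(n : ℚ)) ^ normJ J * u ^ oddJ J * v ^ evenJ J * Wp p J

/-! ### Auxiliary lemmas -/

lemma parts_card_le {N : ℕ} (J : N.Partition) : Multiset.card J.parts ≤ N := by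
  have h := Multiset.card_nsmul_le_sum (s := J.parts) (a := 1) fun x hx => J.parts_pos hx
  simpa [J.parts_sum] using h

lemma oddJ_le {N : ℕ} (J : N.Partition) : oddJ J ≤ N :=
  le_trans (Multiset.card_le_card (Multiset.filter_le _ _)) (parts_card_le J)

/-- The all-ones partition of `l`. -/
def onesP (l : ℕ) : l.Partition where
  parts := Multiset.replicate l 1
  parts_pos := fun hi => by rw [Multiset.eq_of_mem_replicate hi]; norm_num
  parts_sum := by simp

lemma oddJ_onesP (l : ℕ) : oddJ (onesP l) = l := by
  unfold oddJ onesP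
  rw [Multiset.filter_eq_self.mpr, Multiset.card_replicate]
  intro a ha
  rw [Multiset.eq_of_mem_replicate ha]
  exact odd_one

lemma normJ_onesP (l : ℕ) : normJ (onesP l) = l := by
  simp [normJ, onesP]

lemma eq_onesP {l : ℕ} (J : l.Partition) (h : oddJ J = l) : J = onesP l := by
  have hcard : Multiset.card J.parts = l := by
    have h1 : oddJ J ≤ Multiset.card J.parts :=
      Multiset.card_le_card (Multiset.filter_le _ _)
    have h2 := parts_card_le J
    omega
  have hall : ∀ b ∈ J.parts, b = 1 := by
    intro b hb
    by_contra hb1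
    have hbpos := J.parts_pos hb
    have hb2 : 2 ≤ b := by omega
    have hN1 : 0 < l := by
      have : 0 < Multiset.card J.parts := Multiset.card_pos.mpr
        (fun h0 => by simp [h0] at hb)
      omega
    have hs : (b ::ₘ J.parts.erase b).sum = l := by
      rw [Multiset.cons_erase hb]; exact J.parts_sum
    rw [Multiset.sum_cons] at hs
    have hce : Multiset.card (J.parts.erase b) = l - 1 := by
      rw [Multiset.card_erase_of_mem hb, hcard, Nat.pred_eq_sub_one]
    have hle : Multiset.card (J.parts.erase b) • 1 ≤ (J.parts.erase b).sum :=
      Multiset.card_nsmul_le_sum fun x hx => J.parts_pos (Multiset.mem_of_mem_erase hx)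
    simp only [smul_eq_mul, mul_one] at hle
    omega
  exact Nat.Partition.ext (Multiset.eq_replicate.mpr ⟨hcard, hall⟩)

lemma alphaP_one {p : ℕ} (hp : p.Prime) : alphaP p 1 = 1 := by
  have hp2 := hp.two_le
  have h2 : ¬ ((2:ℕ) ∣ 1) := by omega
  have h4 : ¬ ((4:ℕ) ∣ 1) := by omega
  have hpd : ¬ (p ∣ 1) := fun h => by have := Nat.le_of_dvd one_pos h; omega
  have h2p : ¬ (2 * p ∣ 1) := fun h => by have := Nat.le_of_dvd one_pos h; omega
  have h4p : ¬ (4 * p ∣ 1) := fun h => by have := Nat.le_of_dvd one_pos h; omega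
  unfold alphaP sigmaTerm
  rw [if_pos (dvd_refl 1), if_neg h2, if_neg h4, if_neg hpd, if_neg h2p, if_neg h4p]
  norm_num [sigma1]

lemma Wp_onesP {p : ℕ} (hp : p.Prime) (l : ℕ) : Wp p (onesP l) = 1 / (Nat.factorial l) := by
  have hparts : (onesP l).parts = Multiset.replicate l 1 := rfl
  rcases eq_or_ne l 0 with rfl | hl
  · simp [Wp, onesP]
  · unfold Wp mult
    rw [hparts, Multiset.toFinset_replicate, if_neg hl, Finset.prod_singleton,
      Multiset.count_replicate_self, alphaP_one hp, one_pow]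

lemma C_diag {p : ℕ} (hp : p.Prime) (n l : ℕ) :
    (∑ J : l.Partition, if oddJ J = l then (-(n:ℚ)) ^ normJ J * Wp p J else 0)
      = (-(n:ℚ)) ^ l / (Nat.factorial l) := by
  rw [Finset.sum_eq_single (onesP l)]
  · rw [if_pos (oddJ_onesP l), normJ_onesP, Wp_onesP hp]
    ring
  · intro J _ hJ
    rw [if_neg fun hc => hJ (eq_onesP J hc)]
  · intro h; exact absurd (Finset.mem_univ _) h

lemma prod_range_sub_eq_factorial (N : ℕ) :
    ∏ k ∈ Finset.range N, ((N:ℚ) - (k:ℕ)) = (Nat.factorial N : ℚ) := by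
  rw [← Finset.prod_range_reflect (fun k => ((N:ℚ) - (k:ℕ))) N]
  have h : ∀ k ∈ Finset.range N, ((N:ℚ) - ((N - 1 - k : ℕ):ℚ)) = (((k+1 : ℕ)) : ℚ) := by
    intro k hk
    rw [Finset.mem_range] at hk
    have he : N - 1 - k = N - (k + 1) := by omega
    rw [he, Nat.cast_sub (by omega)]
    push_cast; ring
  rw [Finset.prod_congr rfl h, ← Nat.cast_prod, Finset.prod_range_add_one_eq_factorial]

lemma prod_Iio_fin {m : ℕ} (j : Fin m) (f : ℕ → ℚ) :
    ∏ i ∈ Finset.Iio j, f (i : ℕ) = ∏ k ∈ Finset.range (j : ℕ), f k := by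
  rw [← Nat.Iio_eq_range, ← Fin.map_valEmbedding_Iio, Finset.prod_map]
  rfl

theorem A11_det (p : ℕ) (hp : p.Prime) (hpodd : Odd p) (n : ℕ) (hn : 0 < n)
    (m : ℕ) (hm : 1 ≤ m)
    (A : Matrix (Fin m) (Fin m) ℚ)
    (hA : ∀ l h : Fin m, A l h = bP p n l (1 + 2 * (h : ℕ)) 1) :
    A.det = (-(2 * (n : ℚ))) ^ (m * (m - 1) / 2) ∧ A.det ≠ 0 := by
  classical
  set C : Matrix (Fin m) (Fin m) ℚ := Matrix.of fun l r : Fin m =>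
    ∑ J : Nat.Partition (l:ℕ), if oddJ J = (r:ℕ) then (-(n:ℚ)) ^ normJ J * Wp p J else 0
    with hC
  set v : Fin m → ℚ := fun h => 1 + 2 * ((h : ℕ) : ℚ) with hv
  have hAeq : A = C * (Matrix.vandermonde v).transpose := by
    ext l h
    rw [hA l h, bP, Matrix.mul_apply]
    simp only [Matrix.transpose_apply, Matrix.vandermonde_apply, hC, Matrix.of_apply,
      Finset.sum_mul, hv]
    rw [Finset.sum_comm]
    refine Finset.sum_congr rfl fun J _ => ?_
    have hJm : oddJ J < m := lt_of_le_of_lt (oddJ_le J) l.isLt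
    rw [Finset.sum_eq_single (⟨oddJ J, hJm⟩ : Fin m)]
    · rw [if_pos rfl]
      simp only [one_pow]
      ring
    · intro b _ hb
      rw [if_neg fun hc => hb (Fin.ext hc.symm), zero_mul]
    · intro h'; exact absurd (Finset.mem_univ _) h'
  have hdetC : C.det = ∏ l : Fin m, ((-(n:ℚ)) ^ (l:ℕ) / (Nat.factorial (l:ℕ) : ℚ)) := by
    have htri : C.BlockTriangular OrderDual.toDual := by
      intro i j hij
      have hij' : i < j := OrderDual.toDual_lt_toDual.mp hij
      simp only [hC, Matrix.of_apply]
      apply Finset.sum_eq_zero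
      intro J _
      rw [if_neg]
      intro hc
      have h1 := oddJ_le J
      have h2 : (i:ℕ) < (j:ℕ) := hij'
      omega
    rw [Matrix.det_of_lowerTriangular C htri]
    refine Finset.prod_congr rfl fun l _ => ?_
    simp only [hC, Matrix.of_apply]
    exact C_diag hp n (l:ℕ)
  have hdetV : (Matrix.vandermonde v).det
      = ∏ l : Fin m, ((2:ℚ) ^ (l:ℕ) * (Nat.factorial (l:ℕ) : ℚ)) := by
    rw [Matrix.det_vandermonde]
    have hswap : (∏ i : Fin m, ∏ j ∈ Finset.Ioi i, (v j - v i))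
        = ∏ j : Fin m, ∏ i ∈ Finset.Iio j, (v j - v i) := by
      refine Finset.prod_comm' ?_
      intro x y
      simp [Finset.mem_Ioi, Finset.mem_Iio]
    rw [hswap]
    refine Finset.prod_congr rfl fun j _ => ?_
    have h1 : ∀ i ∈ Finset.Iio j, v j - v i = 2 * (((j:ℕ):ℚ) - ((i:ℕ):ℚ)) := by
      intro i _; simp only [hv]; ring
    rw [Finset.prod_congr rfl h1,
      prod_Iio_fin j (fun k => 2 * (((j:ℕ):ℚ) - ((k:ℕ):ℚ))),
      Finset.prod_mul_distrib, Finset.prod_const, Finset.card_range,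
      prod_range_sub_eq_factorial]
  have hdet : A.det = (-(2 * (n : ℚ))) ^ (m * (m - 1) / 2) := by
    rw [hAeq, Matrix.det_mul, Matrix.det_transpose, hdetC, hdetV,
      ← Finset.prod_mul_distrib]
    have hfac : ∀ l : Fin m,
        (-(n:ℚ)) ^ (l:ℕ) / (Nat.factorial (l:ℕ) : ℚ)
          * ((2:ℚ) ^ (l:ℕ) * (Nat.factorial (l:ℕ) : ℚ))
        = (-(2 * (n:ℚ))) ^ (l:ℕ) := by
      intro l
      have h0 : (Nat.factorial (l:ℕ) : ℚ) ≠ 0 :=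
        Nat.cast_ne_zero.mpr (Nat.factorial_ne_zero _)
      have he : (-(2 * (n:ℚ))) = (-(n:ℚ)) * 2 := by ring
      rw [he, mul_pow]
      field_simp
    rw [Finset.prod_congr rfl fun l _ => hfac l,
      Finset.prod_pow_eq_pow_sum]
    congr 1
    rw [Fin.sum_univ_eq_sum_range (fun i => i) m, Finset.sum_range_id]
  refine ⟨hdet, hdet ▸ pow_ne_zero _ ?_⟩
  have hn' : (0:ℚ) < 2 * (n:ℚ) := by positivity
  exact neg_ne_zero.mpr (ne_of_gt hn')
end

section
/- For all integers m ≥ 1 and N ≥ 0: Σ_{h=0}^{m} h^N·(−1)^{h−1}·C(m,h) = 0 when 0 ≤ N < m, and Σ_{h=0}^{m} h^N·(−1)^{h−1}·C(m,h) = (−1)^{m−1}·N!·P_{N−m}(m) when N ≥ m (with the convention 0^0 = 1). -/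
open Finset

/-- P_r(m), defined by P_0(m) = 1, P_r(0) = 0 for r ≥ 1, and
    (r+m)·P_r(m) = m·(P_{r−1}(m) + P_r(m−1)) for r, m ≥ 1. -/
def Ppoly : ℕ → ℕ → ℚ
  | 0, _ => 1
  | _ + 1, 0 => 0
  | r + 1, m + 1 =>
      ((m : ℚ) + 1) * (Ppoly r (m + 1) + Ppoly (r + 1) m) / ((r : ℚ) + 1 + ((m : ℚ) + 1))

lemma Ppoly_zero (m : ℕ) : Ppoly 0 m = 1 := by simp [Ppoly]

lemma Ppoly_succ_zero (r : ℕ) : Ppoly (r+1) 0 = 0 := by simp [Ppoly]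

lemma Ppoly_rec (r n : ℕ) :
    ((r:ℚ) + n + 2) * Ppoly (r+1) (n+1)
      = ((n:ℚ) + 1) * (Ppoly r (n+1) + Ppoly (r+1) n) := by
  have hden : ((r:ℚ) + 1 + ((n:ℚ) + 1)) ≠ 0 := by positivity
  rw [show Ppoly (r+1) (n+1) =
    ((n : ℚ) + 1) * (Ppoly r (n + 1) + Ppoly (r + 1) n) / ((r : ℚ) + 1 + ((n : ℚ) + 1))
    from by simp [Ppoly]]
  field_simp
  ring

def D (m N : ℕ) : ℚ := ∑ h ∈ range (m+1), (-1:ℚ)^h * (m.choose h) * (h:ℚ)^N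

lemma D_zero_right (m : ℕ) (hm : 1 ≤ m) : D m 0 = 0 := by
  have h := Int.alternating_sum_range_choose (n := m)
  rw [if_neg (by omega)] at h
  have h' : ((∑ i ∈ range (m+1), (-1:ℤ)^i * (m.choose i) : ℤ) : ℚ) = 0 := by
    rw [h]; norm_num
  push_cast at h'
  rw [D]
  simpa using h'

lemma D_rec (n N : ℕ) : D (n+1) (N+1) = ((n:ℚ)+1) * D (n+1) N - ((n:ℚ)+1) * D n N := by
  have hext : D n N = ∑ h ∈ range (n+2), (-1:ℚ)^h * (n.choose h) * (h:ℚ)^N := by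
    rw [show n + 2 = (n+1) + 1 from rfl, Finset.sum_range_succ, Nat.choose_succ_self]
    simp [D]
  rw [D, D, hext, Finset.mul_sum, Finset.mul_sum, ← Finset.sum_sub_distrib]
  apply Finset.sum_congr rfl
  intro h _
  rcases h with _ | k
  · simp
  · have h1 := Nat.add_one_mul_choose_eq n k
    have h2 := Nat.choose_succ_succ n k
    have h1' : ((n:ℚ)+1) * (n.choose k) = ((n+1).choose (k+1)) * ((k:ℚ)+1) := by
      exact_mod_cast h1
    have h2' : (((n+1).choose (k+1) : ℕ) : ℚ) = (n.choose k) + (n.choose (k+1)) := by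
      exact_mod_cast h2
    push_cast
    linear_combination ((-1:ℚ)^(k+1) * ((k:ℚ)+1)^N) *
      (-h1' - (((n:ℚ)+1) * h2'))

lemma D_formula (N : ℕ) : ∀ m : ℕ,
    (N < m → D m N = 0) ∧
    (m ≤ N → D m N = (-1:ℚ)^m * (N.factorial) * Ppoly (N - m) m) := by
  induction N with
  | zero =>
    intro m
    constructor
    · intro hm
      exact D_zero_right m hm
    · intro hm
      have : m = 0 := by omega
      subst this
      simp [D, Ppoly_zero]
  | succ N ih =>
    intro m
    rcases m with _ | n
    · refine ⟨by omega, fun _ => ?_⟩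
      simp [D, Ppoly_succ_zero]
    · constructor
      · intro hlt
        rw [D_rec]
        rw [(ih (n+1)).1 (by omega), (ih n).1 (by omega)]
        ring
      · intro hle
        rcases Nat.lt_or_ge N (n+1) with hc | hc
        · -- N = n
          have hNn : N = n := by omega
          subst hNn
          rw [D_rec, (ih (N+1)).1 (by omega), (ih N).2 (le_refl N)]
          simp only [Nat.sub_self, Ppoly_zero, Nat.add_sub_cancel]
          rw [Nat.factorial_succ]
          push_cast
          ring
        · -- n + 1 ≤ N
          obtain ⟨r, hr⟩ : ∃ r, N = r + n + 1 := ⟨N - n - 1, by omega⟩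
          subst hr
          rw [D_rec, (ih (n+1)).2 (by omega), (ih n).2 (by omega)]
          have h1 : r + n + 1 - (n + 1) = r := by omega
          have h2 : r + n + 1 - n = r + 1 := by omega
          have h3 : r + n + 1 + 1 - (n + 1) = r + 1 := by omega
          rw [h1, h2, h3]
          have hrec := Ppoly_rec r n
          have hfact : (((r+n+1+1).factorial : ℕ) : ℚ)
              = ((r:ℚ) + (n:ℚ) + 2) * ((r+n+1).factorial : ℚ) := by
            rw [show r+n+1+1 = (r+n+1)+1 from rfl, Nat.factorial_succ]
            push_cast
            ring
          linear_combination (-((-1:ℚ)^(n+1)) * ((r+n+1).factorial : ℚ)) * hrec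
            - ((-1:ℚ)^(n+1) * Ppoly (r+1) (n+1)) * hfact

theorem binomial_moment_identity (m N : ℕ) (hm : 1 ≤ m) :
    (N < m →
        ∑ h ∈ Finset.range (m + 1),
          (h : ℚ) ^ N * (-1 : ℚ) ^ ((h : ℤ) - 1) * (m.choose h) = 0)
      ∧ (m ≤ N →
        ∑ h ∈ Finset.range (m + 1),
          (h : ℚ) ^ N * (-1 : ℚ) ^ ((h : ℤ) - 1) * (m.choose h)
          = (-1 : ℚ) ^ (m - 1) * (Nat.factorial N) * Ppoly (N - m) m) := by
  have hsum : ∑ h ∈ Finset.range (m + 1),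
      (h : ℚ) ^ N * (-1 : ℚ) ^ ((h : ℤ) - 1) * (m.choose h) = -D m N := by
    rw [D, ← Finset.sum_neg_distrib]
    apply Finset.sum_congr rfl
    intro h _
    have hz : (-1 : ℚ) ^ ((h : ℤ) - 1) = -(-1:ℚ)^h := by
      rw [zpow_sub₀ (by norm_num : (-1:ℚ) ≠ 0), zpow_one, zpow_natCast, div_neg, div_one]
    rw [hz]
    ring
  obtain ⟨n, rfl⟩ : ∃ n, m = n + 1 := ⟨m - 1, by omega⟩
  constructor
  · intro hlt
    rw [hsum, (D_formula N (n+1)).1 hlt, neg_zero]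
  · intro hle
    rw [hsum, (D_formula N (n+1)).2 hle]
    simp only [Nat.add_sub_cancel]
    ring
end

section
/- Let p be an odd prime, n a positive integer, and m ≥ 1. For every l with 0 ≤ l ≤ m−1, Σ_{h=0}^{m} (−1)^h·C(m,h)·b_l(2h, 0) = 0. (Thus Russell's row a_{0,h} = (−1)^h C(m,h) solves the 0-th row system of equations.) -/
open Finset

/-- The alternating binomial sum of `h ^ j` vanishes when `j < m`. -/
lemma alt_sum_choose_pow (j : ℕ) : ∀ m : ℕ, j < m →
    ∑ h ∈ Finset.range (m + 1), (-1 : ℚ) ^ h * (m.choose h) * (h : ℚ) ^ j = 0 := by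
  induction j using Nat.strong_induction_on with
  | _ j ih =>
    intro m hjm
    match j with
    | 0 =>
      simp only [pow_zero, mul_one]
      have := Int.alternating_sum_range_choose_of_ne (n := m) hjm.ne'
      exact_mod_cast this
    | j + 1 =>
      obtain ⟨m', rfl⟩ : ∃ m', m = m' + 1 :=
        ⟨m - 1, (Nat.succ_pred_eq_of_pos (Nat.lt_of_lt_of_le (Nat.zero_lt_succ j) hjm.le)).symm⟩
      have hj : j < m' := Nat.lt_of_succ_lt_succ hjm
      rw [Finset.sum_range_succ']
      have hz : (-1 : ℚ) ^ 0 * ((m' + 1).choose 0) * ((0 : ℕ) : ℚ) ^ (j + 1) = 0 := by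
        simp
      rw [hz, add_zero]
      have key : ∀ h' ∈ Finset.range (m' + 1),
          (-1 : ℚ) ^ (h' + 1) * ((m' + 1).choose (h' + 1)) * ((h' + 1 : ℕ) : ℚ) ^ (j + 1)
            = ∑ i ∈ Finset.range (j + 1),
                (-((m' : ℚ) + 1)) * (j.choose i) *
                  ((-1 : ℚ) ^ h' * (m'.choose h') * (h' : ℚ) ^ i) := by
        intro h' _
        have hnat : (m' + 1) * m'.choose h' = (m' + 1).choose (h' + 1) * (h' + 1) :=
          Nat.add_one_mul_choose_eq m' h'
        have hq : ((m' : ℚ) + 1) * (m'.choose h')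
            = ((m' + 1).choose (h' + 1) : ℚ) * ((h' : ℚ) + 1) := by exact_mod_cast hnat
        have hexp : ((h' : ℚ) + 1) ^ j
            = ∑ i ∈ Finset.range (j + 1), (h' : ℚ) ^ i * 1 ^ (j - i) * (j.choose i) :=
          add_pow (h' : ℚ) 1 j
        push_cast
        rw [pow_succ (-1 : ℚ), pow_succ ((h' : ℚ) + 1)]
        calc (-1 : ℚ) ^ h' * -1 * ((m' + 1).choose (h' + 1)) * (((h' : ℚ) + 1) ^ j * ((h' : ℚ) + 1))
            = -((-1 : ℚ) ^ h' * (((m' + 1).choose (h' + 1) : ℚ) * ((h' : ℚ) + 1)) * ((h' : ℚ) + 1) ^ j) := by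
              ring
          _ = -((-1 : ℚ) ^ h' * (((m' : ℚ) + 1) * (m'.choose h')) * ((h' : ℚ) + 1) ^ j) := by
              rw [hq]
          _ = ∑ i ∈ Finset.range (j + 1),
                (-((m' : ℚ) + 1)) * (j.choose i) *
                  ((-1 : ℚ) ^ h' * (m'.choose h') * (h' : ℚ) ^ i) := by
              rw [hexp, Finset.mul_sum, ← Finset.sum_neg_distrib]
              refine Finset.sum_congr rfl fun i _ => by ring
      rw [Finset.sum_congr rfl key, Finset.sum_comm]
      refine Finset.sum_eq_zero fun i hi => ?_
      have hik : i < m' := lt_of_lt_of_le (Finset.mem_range.mp hi) hj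
      rw [← Finset.mul_sum, ih i (Finset.mem_range.mp hi) m' hik, mul_zero]

theorem row_zero_solution (p : ℕ) (hp : p.Prime) (hpodd : Odd p)
    (n : ℕ) (hn : 0 < n) (m : ℕ) (hm : 1 ≤ m) (l : ℕ) (hl : l ≤ m - 1) :
    ∑ h ∈ Finset.range (m + 1),
      (-1 : ℚ) ^ h * (m.choose h) * bP p n l (2 * (h : ℚ)) 0 = 0 := by
  simp only [bP, Finset.mul_sum]
  rw [Finset.sum_comm]
  refine Finset.sum_eq_zero fun J _ => ?_
  rcases Nat.eq_zero_or_pos (evenJ J) with hJe | hJe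
  · -- v = 0 contributes 0 ^ 0 = 1; reduce to the alternating sum lemma
    have hJo : oddJ J < m := by
      have h1 : oddJ J ≤ normJ J := Multiset.card_le_card (Multiset.filter_le _ _)
      have h2 : normJ J ≤ l := by
        have := Multiset.card_nsmul_le_sum (s := J.parts) (a := 1)
          (fun x hx => J.parts_pos hx)
        simpa [normJ, J.parts_sum] using this
      omega
    calc ∑ h ∈ Finset.range (m + 1), (-1 : ℚ) ^ h * (m.choose h) *
          ((-(n : ℚ)) ^ normJ J * (2 * (h : ℚ)) ^ oddJ J * (0 : ℚ) ^ evenJ J * Wp p J)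
        = ((-(n : ℚ)) ^ normJ J * 2 ^ oddJ J * Wp p J) *
            ∑ h ∈ Finset.range (m + 1), (-1 : ℚ) ^ h * (m.choose h) * (h : ℚ) ^ oddJ J := by
          rw [Finset.mul_sum]
          refine Finset.sum_congr rfl fun h _ => ?_
          rw [hJe, pow_zero, mul_pow]
          ring
      _ = 0 := by rw [alt_sum_choose_pow (oddJ J) m hJo, mul_zero]
  · refine Finset.sum_eq_zero fun h _ => ?_
    rw [zero_pow hJe.ne', mul_zero, zero_mul, mul_zero]
end

section
/- Let p be an odd prime, n a positive integer, m ≥ 1, and l ≥ 0. Then Σ_{h=0}^{m} (−1)^{h−1}·C(m,h)·b_{l+m}(2h, 0) = Σ_{d=m}^{l+m} (−1)^{d+m−1}·(2n)^d·P_{d−m}(m)·d!·( Σ_{J ∈ J[l+m], |J| = d, j_k = 0 for all even k} W_p(J) ). -/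
open Finset

noncomputable def T (d m : ℕ) : ℚ :=
  ∑ h ∈ Finset.range (m + 1), (-1 : ℚ) ^ (m + h) * (m.choose h) * (h : ℚ) ^ d

lemma T_zero_pos (m : ℕ) (hm : m ≠ 0) : T 0 m = 0 := by
  obtain ⟨k, rfl⟩ := Nat.exists_eq_succ_of_ne_zero hm
  have h := Int.alternating_sum_range_choose (n := k + 1)
  simp only [Nat.succ_ne_zero, if_false] at h
  have h' : (∑ i ∈ Finset.range (k + 2), (-1 : ℚ) ^ i * ((k+1).choose i)) = 0 := by
    exact_mod_cast h
  unfold T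
  calc ∑ h ∈ range (k+1+1), (-1:ℚ)^(k+1+h) * ((k+1).choose h) * (h:ℚ)^0
      = (-1:ℚ)^(k+1) * ∑ i ∈ range (k+2), (-1:ℚ)^i * ((k+1).choose i) := by
        rw [Finset.mul_sum]; refine Finset.sum_congr rfl fun h _ => ?_; rw [pow_add]; ring
    _ = 0 := by rw [h']; ring

lemma T_succ (d m : ℕ) : T (d+1) (m+1) = ((m:ℚ)+1) * (T d (m+1) + T d m) := by
  have pascal : ∀ j : ℕ, ((m+1).choose (j+1) : ℚ) = (m.choose j) + (m.choose (j+1)) := by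
    intro j; exact_mod_cast congrArg (Nat.cast (R := ℚ)) (Nat.choose_succ_succ m j)
  have hmul : ∀ j : ℕ, ((m:ℚ)+1) * (m.choose j) = ((m+1).choose (j+1) : ℚ) * ((j:ℚ)+1) := by
    intro j
    have := Nat.add_one_mul_choose_eq m j
    exact_mod_cast congrArg (Nat.cast (R := ℚ)) this
  set S : ℚ := ∑ j ∈ range (m+1), (-1:ℚ)^(m+j) * (m.choose j) * ((j:ℚ)+1)^d with hS
  have h1 : T d (m+1) + T d m = S := by
    have hTm : T d m = ∑ h ∈ range (m+2), (-1:ℚ)^(m+h) * (m.choose h) * (h:ℚ)^d := by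
      rw [Finset.sum_range_succ]
      simp [T, Nat.choose_succ_self]
    rw [hTm]
    unfold T
    rw [← Finset.sum_add_distrib, hS]
    rw [Finset.sum_range_succ' (fun h => (-1:ℚ)^(m+1+h) * ((m+1).choose h) * (h:ℚ)^d + (-1:ℚ)^(m+h) * (m.choose h) * (h:ℚ)^d) (m+1)]
    have h0 : ((-1:ℚ)^(m+1+0) * ((m+1).choose 0) * ((0:ℕ):ℚ)^d + (-1:ℚ)^(m+0) * (m.choose 0) * ((0:ℕ):ℚ)^d) = 0 := by
      simp [pow_succ]
    rw [h0, add_zero]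
    refine Finset.sum_congr rfl fun j _ => ?_
    rw [pascal j]
    push_cast
    ring
  have h2 : T (d+1) (m+1) = ((m:ℚ)+1) * S := by
    unfold T
    rw [Finset.sum_range_succ' (fun h => (-1:ℚ)^(m+1+h) * ((m+1).choose h) * (h:ℚ)^(d+1)) (m+1)]
    have h0 : ((-1:ℚ)^(m+1+0) * ((m+1).choose 0) * ((0:ℕ):ℚ)^(d+1)) = 0 := by simp
    rw [h0, add_zero, hS, Finset.mul_sum]
    refine Finset.sum_congr rfl fun j _ => ?_
    push_cast
    linear_combination (-((-1:ℚ)^(m+j) * ((j:ℚ)+1)^d)) * (hmul j)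
  rw [h2, h1]

lemma T_lt : ∀ d m : ℕ, d < m → T d m = 0 := by
  intro d
  induction d with
  | zero => intro m hm; exact T_zero_pos m (by omega)
  | succ d ih =>
    intro m hm
    obtain ⟨m', rfl⟩ : ∃ m', m = m' + 1 := ⟨m - 1, by omega⟩
    rw [T_succ, ih (m'+1) (by omega), ih m' (by omega)]
    ring

lemma T_zero_zero : T 0 0 = 1 := by simp [T]

lemma T_diag_zero (d : ℕ) : T d 0 = (0:ℚ)^d := by simp [T]

lemma T_ge : ∀ d m : ℕ, m ≤ d → T d m = (Nat.factorial d : ℚ) * Ppoly (d - m) m := by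
  intro d
  induction d with
  | zero =>
    intro m hm
    interval_cases m
    simp [T_zero_zero, Ppoly, Nat.factorial]
  | succ d ih =>
    intro m hm
    rcases m with _ | m'
    ·
      rw [T_diag_zero, zero_pow (by omega)]
      simp [Ppoly]
    ·
      rw [T_succ, ih m' (by omega)]
      rcases eq_or_lt_of_le (Nat.succ_le_of_lt (Nat.lt_of_succ_le hm) : m' + 1 ≤ d + 1) with hcase | hcase
      · -- m' + 1 = d + 1, i.e. m' = d
        have hmd : m' = d := by omega
        subst hmd
        rw [T_lt m' (m'+1) (by omega)]
        have h1 : m' + 1 - (m' + 1) = 0 := by omega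
        have h2 : m' - m' = 0 := by omega
        rw [h1, h2]
        show ((m':ℚ)+1) * (0 + (Nat.factorial m' : ℚ) * Ppoly 0 m') = (Nat.factorial (m'+1) : ℚ) * Ppoly 0 (m'+1)
        simp only [Ppoly]
        push_cast [Nat.factorial_succ]
        ring
      · -- m' + 1 ≤ d
        have hle : m' + 1 ≤ d := by omega
        rw [ih (m'+1) hle]
        obtain ⟨r, hr⟩ : ∃ r, d = m' + 1 + r := ⟨d - m' - 1, by omega⟩
        subst hr
        have e1 : m' + 1 + r - (m' + 1) = r := by omega
        have e2 : m' + 1 + r - m' = r + 1 := by omega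
        have e3 : m' + 1 + r + 1 - (m' + 1) = r + 1 := by omega
        rw [e1, e2, e3]
        show ((m':ℚ)+1) * ((Nat.factorial (m'+1+r):ℚ) * Ppoly r (m'+1) + (Nat.factorial (m'+1+r):ℚ) * Ppoly (r+1) m')
          = (Nat.factorial (m'+1+r+1):ℚ) * Ppoly (r+1) (m'+1)
        have hP : Ppoly (r+1) (m'+1) = ((m':ℚ)+1) * (Ppoly r (m'+1) + Ppoly (r+1) m') / ((r:ℚ)+1+((m':ℚ)+1)) := by
          simp [Ppoly]
        rw [hP, Nat.factorial_succ]
        have hden : ((r:ℚ)+1+((m':ℚ)+1)) ≠ 0 := by positivity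
        field_simp
        push_cast
        ring


lemma neg_one_zpow_sub_one (h : ℕ) : (-1 : ℚ) ^ ((h:ℤ) - 1) = -(-1:ℚ)^h := by
  rw [zpow_sub₀ (by norm_num : (-1:ℚ) ≠ 0), zpow_one, zpow_natCast]
  rw [div_neg, div_one]

lemma multiset_card_le_sum (s : Multiset ℕ) (hs : ∀ x ∈ s, 0 < x) : Multiset.card s ≤ s.sum := by
  induction s using Multiset.induction with
  | empty => simp
  | cons a s ih =>
    simp only [Multiset.card_cons, Multiset.sum_cons]
    have h1 := hs a (by simp)
    have h2 := ih (fun x hx => hs x (by simp [hx]))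
    omega

theorem component_formula (p : ℕ) (hp : p.Prime) (hpodd : Odd p)
    (n : ℕ) (hn : 0 < n) (m : ℕ) (hm : 1 ≤ m) (l : ℕ) :
    ∑ h ∈ Finset.range (m + 1),
        (-1 : ℚ) ^ ((h : ℤ) - 1) * (m.choose h) * bP p n (l + m) (2 * (h : ℚ)) 0
      = ∑ d ∈ Finset.Icc m (l + m),
          (-1 : ℚ) ^ (d + m - 1) * (2 * (n : ℚ)) ^ d * Ppoly (d - m) m * (Nat.factorial d) *
            ∑ J ∈ Finset.univ.filter
                (fun J : (l + m).Partition => normJ J = d ∧ ∀ k ∈ J.parts, Odd k),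
              Wp p J := by
  classical
  have hm2 : (-1:ℚ)^m * (-1:ℚ)^m = 1 := by
    rw [← pow_add, ← two_mul, pow_mul]; norm_num
  -- pointwise key lemma
  have key : ∀ J : (l + m).Partition,
      (∑ h ∈ Finset.range (m + 1), (-1 : ℚ) ^ ((h : ℤ) - 1) * (m.choose h) *
          ((-(n : ℚ)) ^ normJ J * (2 * (h : ℚ)) ^ oddJ J * (0:ℚ) ^ evenJ J * Wp p J))
      = if (m ≤ normJ J ∧ ∀ k ∈ J.parts, Odd k) then
          (-1 : ℚ) ^ (normJ J + m - 1) * (2 * (n : ℚ)) ^ (normJ J) * Ppoly (normJ J - m) m *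
            (Nat.factorial (normJ J)) * Wp p J
        else 0 := by
    intro J
    by_cases he : evenJ J = 0
    · -- all parts odd
      have hall : ∀ k ∈ J.parts, Odd k := by
        intro k hk
        rcases Nat.even_or_odd k with hk2 | hk2
        · exfalso
          have : k ∈ J.parts.filter Even := Multiset.mem_filter.mpr ⟨hk, hk2⟩
          have hpos : 0 < evenJ J := by
            rw [evenJ, Multiset.card_pos]
            exact fun h0 => by rw [h0] at this; exact absurd this (Multiset.notMem_zero k)
          omega
        · exact hk2
      have ho : oddJ J = normJ J := by
        rw [oddJ, normJ]
        congr 1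
        rw [Multiset.filter_eq_self]
        exact hall
      have hd1 : 1 ≤ normJ J := by
        rw [normJ, Nat.one_le_iff_ne_zero, Ne, Multiset.card_eq_zero]
        intro h0
        have := J.parts_sum
        rw [h0] at this
        simp at this
        omega
      have hsum : (∑ h ∈ Finset.range (m + 1), (-1 : ℚ) ^ ((h : ℤ) - 1) * (m.choose h) *
            ((-(n : ℚ)) ^ normJ J * (2 * (h : ℚ)) ^ oddJ J * (0:ℚ) ^ evenJ J * Wp p J))
          = ((-1:ℚ)^(m + 1 + normJ J) * (2*(n:ℚ))^(normJ J) * Wp p J) * T (normJ J) m := by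
        rw [T, Finset.mul_sum]
        refine Finset.sum_congr rfl fun h _ => ?_
        rw [neg_one_zpow_sub_one, he, ho, pow_zero, mul_one]
        rw [neg_pow (n:ℚ) (normJ J)]
        linear_combination ((-1:ℚ)^h * (m.choose h) * (-1:ℚ)^(normJ J) * (n:ℚ)^(normJ J) *
          2^(normJ J) * (h:ℚ)^(normJ J) * Wp p J) * hm2
      rcases lt_or_ge (normJ J) m with hdm | hdm
      · rw [if_neg (fun hcon => absurd hcon.1 (not_le.mpr hdm)), hsum, T_lt _ _ hdm, mul_zero]
      · rw [if_pos ⟨hdm, hall⟩, hsum, T_ge _ _ hdm]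
        obtain ⟨s, hs⟩ : ∃ s, normJ J + m = s + 2 := ⟨normJ J + m - 2, by omega⟩
        have h1 : normJ J + m - 1 = s + 1 := by omega
        have h2 : m + 1 + normJ J = s + 3 := by omega
        rw [h1, h2, pow_succ, pow_succ, pow_succ]
        ring
    · -- has an even part
      have hodd : ¬ (∀ k ∈ J.parts, Odd k) := by
        intro hall
        apply he
        rw [evenJ, Multiset.card_eq_zero, Multiset.filter_eq_nil]
        intro k hk hke
        exact (Nat.not_odd_iff_even.mpr hke) (hall k hk)
      rw [if_neg (fun hcon => hodd hcon.2)]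
      apply Finset.sum_eq_zero
      intro h _
      rw [zero_pow he]
      ring
  -- LHS as a double sum, swapped
  have hL : (∑ h ∈ Finset.range (m + 1),
        (-1 : ℚ) ^ ((h : ℤ) - 1) * (m.choose h) * bP p n (l + m) (2 * (h : ℚ)) 0)
      = ∑ J : (l + m).Partition, ∑ h ∈ Finset.range (m + 1),
          (-1 : ℚ) ^ ((h : ℤ) - 1) * (m.choose h) *
            ((-(n : ℚ)) ^ normJ J * (2 * (h : ℚ)) ^ oddJ J * (0:ℚ) ^ evenJ J * Wp p J) := by
    unfold bP
    simp_rw [Finset.mul_sum]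
    rw [Finset.sum_comm]
  -- RHS as a single sum over partitions
  have hR : (∑ d ∈ Finset.Icc m (l + m),
          (-1 : ℚ) ^ (d + m - 1) * (2 * (n : ℚ)) ^ d * Ppoly (d - m) m * (Nat.factorial d) *
            ∑ J ∈ Finset.univ.filter
                (fun J : (l + m).Partition => normJ J = d ∧ ∀ k ∈ J.parts, Odd k),
              Wp p J)
      = ∑ J : (l + m).Partition,
          if (m ≤ normJ J ∧ ∀ k ∈ J.parts, Odd k) then
            (-1 : ℚ) ^ (normJ J + m - 1) * (2 * (n : ℚ)) ^ (normJ J) * Ppoly (normJ J - m) m *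
              (Nat.factorial (normJ J)) * Wp p J
          else 0 := by
    simp_rw [Finset.mul_sum, Finset.sum_filter]
    rw [Finset.sum_comm]
    refine Finset.sum_congr rfl fun J _ => ?_
    have hle : normJ J ≤ l + m := by
      have := multiset_card_le_sum J.parts (fun x hx => J.parts_pos hx)
      rw [J.parts_sum] at this
      exact this
    by_cases hP : ∀ k ∈ J.parts, Odd k
    · simp only [eq_true hP, and_true]
      rw [Finset.sum_ite_eq (Finset.Icc m (l + m)) (normJ J)
        (fun d => (-1 : ℚ) ^ (d + m - 1) * (2 * (n : ℚ)) ^ d * Ppoly (d - m) m *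
          (Nat.factorial d) * Wp p J)]
      by_cases hmd : m ≤ normJ J
      · rw [if_pos (Finset.mem_Icc.mpr ⟨hmd, hle⟩), if_pos hmd]
      · rw [if_neg (fun hcon => hmd (Finset.mem_Icc.mp hcon).1), if_neg hmd]
    · rw [if_neg (fun hcon => hP hcon.2)]
      exact Finset.sum_eq_zero fun d _ => if_neg (fun hcon => hP hcon.2)
  rw [hL, hR]
  exact Finset.sum_congr rfl fun J _ => key J
end

section
/- For all integers m ≥ 0: P_1(m) = m/2, P_2(m) = m(3m+1)/24, P_3(m) = m²(m+1)/48, and P_4(m) = m(−2 + 5m + 30m² + 15m³)/5760. -/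
theorem Ppoly_closed_forms (m : ℕ) :
    Ppoly 1 m = (m : ℚ) / 2
    ∧ Ppoly 2 m = (m : ℚ) * (3 * m + 1) / 24
    ∧ Ppoly 3 m = (m : ℚ) ^ 2 * (m + 1) / 48
    ∧ Ppoly 4 m = (m : ℚ) * (-2 + 5 * m + 30 * (m : ℚ) ^ 2 + 15 * (m : ℚ) ^ 3) / 5760 := by
  induction m with
  | zero => norm_num [Ppoly]
  | succ n ih =>
    obtain ⟨h1, h2, h3, h4⟩ := ih
    have e0 : Ppoly 0 (n + 1) = 1 := by rw [Ppoly]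
    have key : ∀ r : ℕ, Ppoly (r + 1) (n + 1) =
        ((n : ℚ) + 1) * (Ppoly r (n + 1) + Ppoly (r + 1) n) / ((r : ℚ) + 1 + ((n : ℚ) + 1)) := by
      intro r; rw [Ppoly]
    have h1' : Ppoly 1 (n + 1) = ((n : ℚ) + 1) / 2 := by
      rw [key 0, e0, h1]; push_cast; field_simp; ring
    have h2' : Ppoly 2 (n + 1) = ((n : ℚ) + 1) * (3 * ((n : ℚ) + 1) + 1) / 24 := by
      rw [key 1, h1', h2]; push_cast; field_simp; ring
    have h3' : Ppoly 3 (n + 1) = ((n : ℚ) + 1) ^ 2 * (((n : ℚ) + 1) + 1) / 48 := by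
      rw [key 2, h2', h3]; push_cast; field_simp; ring
    have h4' : Ppoly 4 (n + 1) = ((n : ℚ) + 1) * (-2 + 5 * ((n : ℚ) + 1)
        + 30 * ((n : ℚ) + 1) ^ 2 + 15 * ((n : ℚ) + 1) ^ 3) / 5760 := by
      rw [key 3, h3', h4]; push_cast; field_simp; ring
    refine ⟨?_, ?_, ?_, ?_⟩ <;> push_cast <;>
      simp only [h1', h2', h3', h4']
end

section
/- Define rational numbers c_{r,s} for integers r ≥ 0, 0 ≤ s ≤ r, by c_{0,0} = 1, c_{r−1,r} = 0, c_{r,0} = 0 for r ≥ 1, and c_{r,s} = (s/(r+s))·(c_{r−1,s−1} + c_{r−1,s}) for r ≥ 1, 1 ≤ s ≤ r. Then for all integers r ≥ 0 and m ≥ 0, P_r(m) = Σ_{s=0}^{r} c_{r,s}·C(m,s). -/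
/-- c_{r,s}: c_{0,0} = 1, c_{r,0} = 0 for r ≥ 1, c_{r−1,r} = 0 (out-of-range values vanish),
and c_{r,s} = (s/(r+s))·(c_{r−1,s−1} + c_{r−1,s}) for r ≥ 1, 1 ≤ s ≤ r. -/
def cCoef : ℕ → ℕ → ℚ
  | 0, 0 => 1
  | 0, _ + 1 => 0
  | _ + 1, 0 => 0
  | r + 1, s + 1 =>
      if s + 1 ≤ r + 1 then
        (((s : ℚ) + 1) / ((r : ℚ) + 1 + ((s : ℚ) + 1))) * (cCoef r s + cCoef r (s + 1))
      else 0

open Finset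

lemma cCoef_zero (r : ℕ) : cCoef (r+1) 0 = 0 := rfl

lemma cCoef_top (r : ℕ) : cCoef r (r+1) = 0 := by
  cases r with
  | zero => rfl
  | succ n => rw [cCoef, if_neg (by omega)]

lemma cCoef_rec (r i : ℕ) (h : i < r + 1) :
    ((r:ℚ) + 2 + i) * cCoef (r+1) (i+1) = ((i:ℚ)+1) * (cCoef r i + cCoef r (i+1)) := by
  rw [cCoef, if_pos (by omega)]
  have hne : (r:ℚ) + 1 + ((i:ℚ) + 1) ≠ 0 := by positivity
  field_simp
  ring

lemma choose1 (m i : ℕ) : ((i:ℚ)+1) * ((m+1).choose (i+1) : ℚ) = ((m:ℚ)+1) * (m.choose i : ℚ) := by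
  have h : ((m+1) * m.choose i : ℕ) = ((m+1).choose (i+1)) * (i+1) := Nat.add_one_mul_choose_eq m i
  have h' : ((m:ℚ)+1) * (m.choose i : ℚ) = ((m+1).choose (i+1) : ℚ) * ((i:ℚ)+1) := by
    exact_mod_cast congrArg (Nat.cast : ℕ → ℚ) h
  linarith [h']

lemma pascalQ (m i : ℕ) : (((m+1).choose (i+1) : ℕ) : ℚ) = (m.choose i : ℚ) + (m.choose (i+1) : ℚ) := by
  exact_mod_cast Nat.choose_succ_succ m i

lemma choose2 (m i : ℕ) : ((m:ℚ) - i) * ((m+1).choose (i+1) : ℚ) = ((m:ℚ)+1) * (m.choose (i+1) : ℚ) := by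
  have h1 := choose1 m i
  have h2 := pascalQ m i
  linear_combination ((m:ℚ)+1) * h2 - h1

lemma shift (r m : ℕ) :
    ∑ t ∈ range (r+1), cCoef r t * (((m+1).choose t : ℕ) : ℚ)
    = ∑ t ∈ range (r+1), (cCoef r t + cCoef r (t+1)) * ((m.choose t : ℕ) : ℚ) := by
  have h1 : ∑ t ∈ range (r+1), cCoef r t * (((m+1).choose t : ℕ) : ℚ)
      = (∑ i ∈ range r, (cCoef r (i+1) * ((m.choose i : ℕ) : ℚ)
          + cCoef r (i+1) * ((m.choose (i+1) : ℕ) : ℚ))) + cCoef r 0 := by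
    rw [Finset.sum_range_succ' (fun t => cCoef r t * (((m+1).choose t : ℕ) : ℚ)) r]
    simp only [Nat.choose_zero_right, Nat.cast_one, mul_one]
    congr 1
    refine Finset.sum_congr rfl fun i _ => ?_
    rw [pascalQ m i]; ring
  rw [h1, Finset.sum_add_distrib]
  have h2 : ∑ i ∈ range r, cCoef r (i+1) * ((m.choose i : ℕ) : ℚ)
      = ∑ i ∈ range (r+1), cCoef r (i+1) * ((m.choose i : ℕ) : ℚ) := by
    rw [Finset.sum_range_succ, cCoef_top, zero_mul, add_zero]
  have h3 : (∑ i ∈ range r, cCoef r (i+1) * ((m.choose (i+1) : ℕ) : ℚ)) + cCoef r 0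
      = ∑ i ∈ range (r+1), cCoef r i * ((m.choose i : ℕ) : ℚ) := by
    rw [Finset.sum_range_succ' (fun i => cCoef r i * ((m.choose i : ℕ) : ℚ)) r]
    simp
  rw [add_right_comm, h2, add_assoc, add_comm (cCoef r 0), h3, ← Finset.sum_add_distrib]
  exact Finset.sum_congr rfl fun i _ => by ring

lemma key (r m : ℕ) :
    ((r:ℚ) + m + 2) * ∑ s ∈ range (r+2), cCoef (r+1) s * (((m+1).choose s : ℕ) : ℚ)
    = ((m:ℚ)+1) * ((∑ s ∈ range (r+1), cCoef r s * (((m+1).choose s : ℕ) : ℚ))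
        + ∑ s ∈ range (r+2), cCoef (r+1) s * ((m.choose s : ℕ) : ℚ)) := by
  rw [Finset.sum_range_succ' (fun s => cCoef (r+1) s * (((m+1).choose s : ℕ) : ℚ)) (r+1)]
  rw [Finset.sum_range_succ' (fun s => cCoef (r+1) s * ((m.choose s : ℕ) : ℚ)) (r+1)]
  simp only [cCoef_zero, zero_mul, add_zero]
  rw [shift r m, Finset.mul_sum]
  have step : ∀ i ∈ range (r+1),
      ((r:ℚ) + m + 2) * (cCoef (r+1) (i+1) * (((m+1).choose (i+1) : ℕ) : ℚ))
      = ((m:ℚ)+1) * ((cCoef r i + cCoef r (i+1)) * ((m.choose i : ℕ) : ℚ)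
          + cCoef (r+1) (i+1) * ((m.choose (i+1) : ℕ) : ℚ)) := by
    intro i hi
    have hi' : i < r + 1 := Finset.mem_range.mp hi
    have hA := cCoef_rec r i hi'
    have hB := choose1 m i
    have hC := choose2 m i
    linear_combination (((m+1).choose (i+1) : ℕ) : ℚ) * hA
      + (cCoef r i + cCoef r (i+1)) * hB + cCoef (r+1) (i+1) * hC
  rw [Finset.sum_congr rfl step, ← Finset.mul_sum, Finset.sum_add_distrib, mul_add]

theorem Ppoly_binomial_expansion (r m : ℕ) :
    Ppoly r m = ∑ s ∈ Finset.range (r + 1), cCoef r s * (m.choose s : ℚ) := by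
  induction r generalizing m with
  | zero => simp [Ppoly, cCoef]
  | succ r ihr =>
    induction m with
    | zero =>
      rw [show Ppoly (r+1) 0 = 0 from by rw [Ppoly]]
      symm
      refine Finset.sum_eq_zero fun s hs => ?_
      match s with
      | 0 => simp [cCoef_zero]
      | t+1 => simp [Nat.choose_eq_zero_of_lt (Nat.succ_pos t)]
    | succ m ihm =>
      have hk := key r m
      have hne : (r:ℚ) + 1 + ((m:ℚ) + 1) ≠ 0 := by positivity
      have e : r + 1 + 1 = r + 2 := rfl
      rw [Ppoly, ihr (m+1), ihm, e, div_eq_iff hne]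
      push_cast at hk ⊢
      linear_combination -hk
end
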